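/- arXiv:2409.13834 — 2 statements merged into one kernel-verified Lean document; each statement's English description precedes it below -/
import Mathlib

section
/- Let M be a 3-connected matroid and let F be a maximal fan of M with ordering (e_1, …, e_{|F|}), where either |F| = 2, or |F| ≥ 3 and {e_1, e_2, e_3} is a triad. Suppose M has a 4-element circuit C = {e_1, e_i, a, b} with i ∈ {2, 3} and a, b ∉ F. Then for all x ∈ E(M) − (F ∪ C), we have x ∉ cl*(F). -/
open Matroid Set

namespace DetPairs

variable {α : Type*}

/-- The rank of a set in a matroid: the maximum size of an independent subset
(as an integer, for convenient arithmetic). -/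
noncomputable def r (M : Matroid α) (X : Set α) : ℤ :=
  ((sSup (Set.ncard '' {I | M.Indep I ∧ I ⊆ X}) : ℕ) : ℤ)

/-- The connectivity function `λ_M(X) = r(X) + r(E − X) − r(M)`. -/
noncomputable def lam (M : Matroid α) (X : Set α) : ℤ :=
  r M X + r M (M.E \ X) - r M M.E

/-- Local connectivity `⊓(X,Y) = r(X) + r(Y) − r(X ∪ Y)`. -/
noncomputable def localConn (M : Matroid α) (X Y : Set α) : ℤ :=
  r M X + r M Y - r M (X ∪ Y)

/-- A circuit: a minimal dependent set. -/
def Circuit (M : Matroid α) (C : Set α) : Prop :=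
  C ⊆ M.E ∧ ¬ M.Indep C ∧ ∀ D, D ⊂ C → M.Indep D

/-- A cocircuit: a circuit of the dual. -/
def Cocircuit (M : Matroid α) (C : Set α) : Prop := Circuit M✶ C

/-- A triangle: a 3-element circuit. -/
def Triangle (M : Matroid α) (T : Set α) : Prop := Circuit M T ∧ T.ncard = 3

/-- A triad: a 3-element cocircuit. -/
def Triad (M : Matroid α) (T : Set α) : Prop := Cocircuit M T ∧ T.ncard = 3

/-- A quad: a 4-element set that is both a circuit and a cocircuit. -/
def Quad (M : Matroid α) (Q : Set α) : Prop :=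
  Circuit M Q ∧ Cocircuit M Q ∧ Q.ncard = 4

/-- Deletion of a set of elements. -/
def Del (M : Matroid α) (D : Set α) : Matroid α := M ↾ (M.E \ D)

/-- Contraction of a set of elements. -/
def Con (M : Matroid α) (C : Set α) : Matroid α := (M✶ ↾ (M.E \ C))✶

/-- `M` is 3-connected: it has no `k`-separation for `k = 1, 2`, where a
`k`-separation is a set `X` with `λ(X) = k − 1`, `|X| ≥ k` and `|E − X| ≥ k`. -/
def ThreeConnected (M : Matroid α) : Prop :=
  ∀ k : ℕ, 0 < k → k < 3 → ∀ X ⊆ M.E,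
    ¬ (lam M X = (k : ℤ) - 1 ∧ (k : ℤ) ≤ X.ncard ∧ (k : ℤ) ≤ (M.E \ X).ncard)

/-- A detachable pair: distinct elements `e, f` such that `M \ e \ f` or
`M / e / f` is 3-connected. -/
def DetachablePair (M : Matroid α) (e f : α) : Prop :=
  e ≠ f ∧ e ∈ M.E ∧ f ∈ M.E ∧
    (ThreeConnected (Del M {e, f}) ∨ ThreeConnected (Con M {e, f}))

/-- The triple of elements with indices `i, i+1, i+2` in an ordering. -/
def tri (e : ℕ → α) (i : ℕ) : Set α := {e i, e (i + 1), e (i + 2)}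

/-- `(e 0, …, e (n-1))` is a fan ordering of length `n ≥ 3` in `M`:
consecutive triples alternate between triangles and triads. -/
def FanOrd (M : Matroid α) (n : ℕ) (e : ℕ → α) : Prop :=
  3 ≤ n ∧ Set.InjOn e (Set.Iio n) ∧ (∀ i < n, e i ∈ M.E) ∧
    (Triangle M (tri e 0) ∨ Triad M (tri e 0)) ∧
    ∀ i, i + 3 < n →
      (Triangle M (tri e i) → Triad M (tri e (i + 1))) ∧
      (Triad M (tri e i) → Triangle M (tri e (i + 1)))

/-- A fan (as a set): either a 2-element subset of the ground set, or the
underlying set of a fan ordering of length at least 3. -/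
def IsFan (M : Matroid α) (F : Set α) : Prop :=
  (F ⊆ M.E ∧ F.ncard = 2) ∨ ∃ n e, FanOrd M n e ∧ F = e '' Set.Iio n

/-- A maximal fan: a fan contained in no strictly larger fan. -/
def MaximalFan (M : Matroid α) (F : Set α) : Prop :=
  IsFan M F ∧ ∀ F', IsFan M F' → F ⊆ F' → F' = F

/-- `M` is a wheel or a whirl: its ground set has a cyclic ordering of even size
`2n` in which consecutive triples alternate between triangles and triads. -/
def IsWheelOrWhirl (M : Matroid α) : Prop :=
  ∃ (n : ℕ) (e : ℕ → α), 2 ≤ n ∧ Set.InjOn e (Set.Iio (2 * n)) ∧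
    M.E = e '' Set.Iio (2 * n) ∧
    ∀ i < 2 * n,
      (i % 2 = 0 → Triangle M {e i, e ((i + 1) % (2 * n)), e ((i + 2) % (2 * n))}) ∧
      (i % 2 = 1 → Triad M {e i, e ((i + 1) % (2 * n)), e ((i + 2) % (2 * n))})

/-- An `M(K₄)`-separator: a 6-element set `{a,b,c,x,y,z}` where `{x,y,z}` is a
triad and `{a,b,c}`, `{a,x,y}`, `{b,x,z}`, `{c,y,z}` are triangles. -/
def MK4Sep (M : Matroid α) (S : Set α) : Prop :=
  ∃ a b c x y z : α, S = {a, b, c, x, y, z} ∧ S.ncard = 6 ∧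
    Triad M {x, y, z} ∧ Triangle M {a, b, c} ∧ Triangle M {a, x, y} ∧
    Triangle M {b, x, z} ∧ Triangle M {c, y, z}

/-- A vertical 3-separation `(X, {e}, Y)` of `M`. -/
def VertThreeSep (M : Matroid α) (X : Set α) (e : α) (Y : Set α) : Prop :=
  X ∪ {e} ∪ Y = M.E ∧ Disjoint X Y ∧ e ∉ X ∧ e ∉ Y ∧
    lam M X = 2 ∧ lam M Y = 2 ∧ e ∈ M.closure X ∧ e ∈ M.closure Y ∧
    3 ≤ r M X ∧ 3 ≤ r M Y

/-- `N` is a simplification of `M`: a restriction of `M` to a set of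
representatives, one from each parallel class of nonloops. -/
def SimplificationOf (M N : Matroid α) : Prop :=
  ∃ X : Set α, (∀ x ∈ X, x ∈ M.E ∧ x ∉ M.closure ∅) ∧ N = M ↾ X ∧
    ∀ y ∈ M.E, y ∉ M.closure ∅ →
      ∃! x, x ∈ X ∧ M.closure {y} = M.closure {x}


section AuxLemmas


variable {M : Matroid α} {X Y I J B : Set α}

lemma ncard_le_r [M.Finite] (hI : M.Indep I) (hIX : I ⊆ X) : (I.ncard : ℤ) ≤ r M X := by
  have hbdd : BddAbove (Set.ncard '' {I | M.Indep I ∧ I ⊆ X}) := by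
    refine ⟨M.E.ncard, ?_⟩
    rintro m ⟨J, ⟨hJ, -⟩, rfl⟩
    exact ncard_le_ncard hJ.subset_ground M.ground_finite
  have := le_csSup hbdd ⟨I, ⟨hI, hIX⟩, rfl⟩
  unfold r
  exact_mod_cast this

lemma r_eq_of_basis' [M.Finite] (hI : M.IsBasis' I X) : r M X = I.ncard := by
  refine le_antisymm ?_ (ncard_le_r hI.indep hI.subset)
  have h : sSup (Set.ncard '' {I | M.Indep I ∧ I ⊆ X}) ≤ I.ncard := by
    refine csSup_le ⟨0, ⟨∅, ⟨M.empty_indep, empty_subset _⟩, by simp⟩⟩ ?_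
    rintro m ⟨J, ⟨hJ, hJX⟩, rfl⟩
    obtain ⟨J₁, hJ₁, hsub⟩ := hJ.subset_isBasis'_of_subset hJX
    have h1 : J.ncard ≤ J₁.ncard :=
      ncard_le_ncard hsub (M.set_finite J₁ hJ₁.indep.subset_ground)
    have h2 : J₁.ncard = I.ncard := by
      rw [Set.ncard_def, hJ₁.encard_eq_encard hI, ← Set.ncard_def]
    omega
  unfold r
  exact_mod_cast h

lemma r_nonneg [M.Finite] (X : Set α) : 0 ≤ r M X := by
  simpa using ncard_le_r M.empty_indep (empty_subset X)

lemma r_mono [M.Finite] (h : X ⊆ Y) : r M X ≤ r M Y := by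
  obtain ⟨I, hI⟩ := M.exists_isBasis' X
  rw [r_eq_of_basis' hI]
  exact ncard_le_r hI.indep (hI.subset.trans h)

lemma r_le_ncard [M.Finite] (hX : X.Finite) : r M X ≤ X.ncard := by
  obtain ⟨I, hI⟩ := M.exists_isBasis' X
  rw [r_eq_of_basis' hI]
  exact_mod_cast ncard_le_ncard hI.subset hX

lemma r_closure [M.Finite] (X : Set α) : r M (M.closure X) = r M X := by
  obtain ⟨I, hI⟩ := M.exists_isBasis' X
  rw [r_eq_of_basis' hI, r_eq_of_basis' hI.isBasis_closure_right.isBasis']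

lemma r_le_of_subset_closure [M.Finite] (h : Y ⊆ M.closure X) : r M Y ≤ r M X := by
  rw [← r_closure (M := M) X]
  exact r_mono h

lemma r_union_le [M.Finite] (hX : X ⊆ M.E) (hY : Y ⊆ M.E) :
    r M (X ∪ Y) ≤ r M X + r M Y := by
  obtain ⟨I, hI⟩ := M.exists_isBasis' X
  obtain ⟨J, hJ⟩ := M.exists_isBasis' Y
  have hXc : X ⊆ M.closure (I ∪ J) := by
    refine (M.subset_closure X hX).trans ?_
    rw [← hI.closure_eq_closure]
    exact M.closure_subset_closure subset_union_left
  have hYc : Y ⊆ M.closure (I ∪ J) := by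
    refine (M.subset_closure Y hY).trans ?_
    rw [← hJ.closure_eq_closure]
    exact M.closure_subset_closure subset_union_right
  have h1 : r M (X ∪ Y) ≤ r M (I ∪ J) := r_le_of_subset_closure (union_subset hXc hYc)
  have h2 : r M (I ∪ J) ≤ (I ∪ J).ncard :=
    r_le_ncard ((M.set_finite I hI.indep.subset_ground).union
      (M.set_finite J hJ.indep.subset_ground))
  have h3 : (I ∪ J).ncard ≤ I.ncard + J.ncard := ncard_union_le I J
  have h4 : (I.ncard : ℤ) ≤ r M X := ncard_le_r hI.indep hI.subset
  have h5 : (J.ncard : ℤ) ≤ r M Y := ncard_le_r hJ.indep hJ.subset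
  have h6 : ((I ∪ J).ncard : ℤ) ≤ (I.ncard : ℤ) + J.ncard := by exact_mod_cast h3
  have := h1.trans h2
  omega

lemma r_union_ncard_le [M.Finite] (hX : X ⊆ M.E) (hY : Y ⊆ M.E) :
    r M (X ∪ Y) ≤ r M X + Y.ncard :=
  (r_union_le hX hY).trans
    (by have := r_le_ncard (M := M) (M.set_finite Y hY); omega)

lemma r_compl_add [M.Finite] (hX : X ⊆ M.E) : r M M.E ≤ r M X + r M (M.E \ X) := by
  have : M.E = X ∪ (M.E \ X) := by rw [union_diff_cancel hX]
  calc r M M.E = r M (X ∪ (M.E \ X)) := by rw [← this]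
    _ ≤ _ := r_union_le hX diff_subset

lemma r_base [M.Finite] (hB : M.IsBase B) : r M M.E = B.ncard :=
  r_eq_of_basis' hB.isBasis_ground.isBasis'

lemma base_of_indep_r [M.Finite] (hI : M.Indep I) (hcard : (I.ncard : ℤ) = r M M.E) :
    M.IsBase I := by
  obtain ⟨B, hB, hIB⟩ := hI.exists_isBase_superset
  have hBcard : (B.ncard : ℤ) = r M M.E := (r_base hB).symm
  have : I = B :=
    Set.eq_of_subset_of_ncard_le hIB (by omega) (M.set_finite B hB.subset_ground)
  rwa [this]


variable {M : Matroid α} {X Y I J B C D G : Set α} {x y : α}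

lemma r_dual [M.Finite] (hX : X ⊆ M.E) :
    r M✶ X = X.ncard + r M (M.E \ X) - r M M.E := by
  have hfinE := M.ground_finite
  have hfinX := M.set_finite X hX
  obtain ⟨J, hJ⟩ := M.exists_isBasis (M.E \ X) diff_subset
  obtain ⟨B, hB, hJB⟩ := hJ.indep.exists_isBase_superset
  have hBE : B ⊆ M.E := hB.subset_ground
  have hBdiff : B ∩ (M.E \ X) = J :=
    (hJ.eq_of_subset_indep (hB.indep.inter_right _)
      (subset_inter hJB hJ.subset) inter_subset_right).symm
  have hrJ : r M (M.E \ X) = (J.ncard : ℤ) := r_eq_of_basis' hJ.isBasis'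
  have hrB : r M M.E = (B.ncard : ℤ) := r_base hB
  have hBsplit : (B ∩ X).ncard + (B \ X).ncard = B.ncard :=
    ncard_inter_add_ncard_diff_eq_ncard B X (hfinE.subset hBE)
  have hBdX : B \ X = J := by
    rw [← hBdiff]; ext z
    simp only [mem_diff, mem_inter_iff]
    exact ⟨fun ⟨h1, h2⟩ => ⟨h1, hBE h1, h2⟩, fun ⟨h1, _, h2⟩ => ⟨h1, h2⟩⟩
  rw [hBdX] at hBsplit
  have hXsplit : (X ∩ B).ncard + (X \ B).ncard = X.ncard :=
    ncard_inter_add_ncard_diff_eq_ncard X B hfinX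
  have hXBcomm : (X ∩ B).ncard = (B ∩ X).ncard := by rw [inter_comm]
  have hcoind : M✶.Indep (X \ B) := by
    rw [dual_indep_iff_exists (diff_subset.trans hX)]
    exact ⟨B, hB, disjoint_sdiff_left⟩
  have hlow : ((X \ B).ncard : ℤ) ≤ r M✶ X := ncard_le_r hcoind diff_subset
  obtain ⟨Istar, hIstar⟩ := M✶.exists_isBasis' X
  have hrIstar : r M✶ X = (Istar.ncard : ℤ) := r_eq_of_basis' hIstar
  have hIstarE : Istar ⊆ M.E := hIstar.indep.subset_ground.trans (by rw [dual_ground])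
  obtain ⟨B', hB', hB'I⟩ : ∃ B', M.IsBase B' ∧ B' ⊆ M.E \ Istar := by
    have h := hIstar.indep
    rw [dual_indep_iff_exists hIstarE] at h
    obtain ⟨B', hB', hdisj⟩ := h
    exact ⟨B', hB', subset_diff.2 ⟨hB'.subset_ground, hdisj.symm⟩⟩
  have hB'E : B' ⊆ M.E := hB'.subset_ground
  have hB'split : (B' ∩ X).ncard + (B' \ X).ncard = B'.ncard :=
    ncard_inter_add_ncard_diff_eq_ncard B' X (hfinE.subset hB'E)
  have hB'dep : ((B' \ X).ncard : ℤ) ≤ r M (M.E \ X) :=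
    ncard_le_r (hB'.indep.subset diff_subset) (fun z hz => ⟨hB'E hz.1, hz.2⟩)
  have hB'X : (B' ∩ X).ncard ≤ (X \ Istar).ncard := by
    refine ncard_le_ncard ?_ (hfinX.diff)
    rintro z ⟨hzB, hzX⟩
    exact ⟨hzX, fun hzI => (hB'I hzB).2 hzI⟩
  have hIstarX : (X \ Istar).ncard + Istar.ncard = X.ncard :=
    ncard_diff_add_ncard_of_subset hIstar.subset hfinX
  have hrB' : r M M.E = (B'.ncard : ℤ) := r_base hB'
  omega

lemma r_circuit_le (hC : Circuit M C) (hy : y ∈ C) : C ⊆ M.closure (C \ {y}) := by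
  have hCss : C \ {y} ⊂ C := by
    refine ⟨diff_subset, fun h => ?_⟩
    exact absurd (h hy).2 (by simp)
  have hind : M.Indep (C \ {y}) := hC.2.2 _ hCss
  have hdep : M.Dep (insert y (C \ {y})) := by
    rw [insert_diff_singleton, insert_eq_of_mem hy]
    exact ⟨hC.2.1, hC.1⟩
  have hmem : y ∈ M.closure (C \ {y}) := by
    rw [hind.mem_closure_iff]
    exact Or.inl hdep
  intro z hz
  rcases eq_or_ne z y with rfl | hne
  · exact hmem
  · exact M.subset_closure _ (diff_subset.trans hC.1) ⟨hz, hne⟩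

lemma r_circuit_card [M.Finite] (hC : Circuit M C) (hy : y ∈ C) :
    r M C ≤ (C.ncard : ℤ) - 1 := by
  have hfin : C.Finite := M.set_finite C hC.1
  have h1 : r M C ≤ r M (C \ {y}) := r_le_of_subset_closure (r_circuit_le hC hy)
  have h2 : r M (C \ {y}) ≤ ((C \ {y}).ncard : ℤ) := r_le_ncard (hfin.diff)
  have h3 : (C \ {y}).ncard + 1 = C.ncard := by
    rw [← ncard_diff_add_ncard_of_subset (singleton_subset_iff.2 hy) hfin, ncard_singleton]
  omega

lemma circuit_nonempty (hC : Circuit M C) : C.Nonempty := by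
  rcases C.eq_empty_or_nonempty with rfl | h
  · exact absurd M.empty_indep hC.2.1
  · exact h

lemma cocircuit_three [M.Finite] (hM : ThreeConnected M) (hD : Circuit M✶ D)
    (hE : 4 ≤ M.E.ncard) : 3 ≤ D.ncard := by
  by_contra hlt
  push_neg at hlt
  have hfinE := M.ground_finite
  have hDE : D ⊆ M.E := hD.1.trans (by rw [dual_ground])
  have hfinD := hfinE.subset hDE
  have hne : 1 ≤ D.ncard := (ncard_pos hfinD).2 (circuit_nonempty hD)
  have hDcompl : (M.E \ D).ncard + D.ncard = M.E.ncard :=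
    ncard_diff_add_ncard_of_subset hDE hfinE
  -- r (E \ D) ≤ r E - 1
  have hrcompl : r M (M.E \ D) ≤ r M M.E - 1 := by
    by_contra hcon
    push_neg at hcon
    have hle : r M (M.E \ D) ≤ r M M.E := r_mono diff_subset
    have heq : r M (M.E \ D) = r M M.E := by omega
    obtain ⟨I, hI⟩ := M.exists_isBasis (M.E \ D) diff_subset
    have : M.IsBase I := base_of_indep_r hI.indep
      (by rw [← r_eq_of_basis' hI.isBasis']; exact heq)
    have : M✶.Indep D := by
      rw [dual_indep_iff_exists hDE]
      exact ⟨I, this, (subset_diff.1 hI.subset).2.symm⟩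
    exact hD.2.1 this
  have hrD : r M D ≤ (D.ncard : ℤ) := r_le_ncard hfinD
  have hlam_le : lam M D ≤ (D.ncard : ℤ) - 1 := by unfold lam; omega
  have hlam_ge : 0 ≤ lam M D := by unfold lam; have := r_compl_add hDE; omega
  have h2 : (2:ℤ) ≤ ((M.E \ D).ncard : ℤ) := by
    have : D.ncard ≤ M.E.ncard := ncard_le_ncard hDE hfinE
    omega
  rcases (by omega : lam M D = 0 ∨ lam M D = 1) with h0 | h1
  · exact hM 1 one_pos (by norm_num) D hDE ⟨by rw [h0]; norm_num, by exact_mod_cast hne, by omega⟩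
  · have hD2 : (2:ℤ) ≤ (D.ncard : ℤ) := by omega
    exact hM 2 two_pos (by norm_num) D hDE ⟨by rw [h1]; norm_num, hD2, h2⟩

lemma not_triangle_triad [M.Finite] (hM : ThreeConnected M) {T : Set α}
    (hTc : Circuit M T) (hTd : Circuit M✶ T) (hT3 : T.ncard = 3) (hE : 5 ≤ M.E.ncard) :
    False := by
  have hfinE := M.ground_finite
  have hTE : T ⊆ M.E := hTc.1
  obtain ⟨y, hy⟩ := circuit_nonempty hTc
  have hrT : r M T ≤ 2 := by have := r_circuit_card hTc hy; omega
  have hrT' : r M✶ T ≤ 2 := by have := r_circuit_card hTd hy; omega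
  have hdual := r_dual (M := M) hTE
  have hrcompl : r M (M.E \ T) ≤ r M M.E - 1 := by omega
  have hlam : lam M T ≤ 1 := by unfold lam; omega
  have hlam_ge : 0 ≤ lam M T := by unfold lam; have := r_compl_add hTE; omega
  have hcompl : (M.E \ T).ncard + T.ncard = M.E.ncard :=
    ncard_diff_add_ncard_of_subset hTE hfinE
  have h2 : (2:ℤ) ≤ ((M.E \ T).ncard : ℤ) := by omega
  rcases (by omega : lam M T = 0 ∨ lam M T = 1) with h0 | h1
  · exact hM 1 one_pos (by norm_num) T hTE ⟨by rw [h0]; norm_num, by omega, by omega⟩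
  · exact hM 2 two_pos (by norm_num) T hTE ⟨by rw [h1]; norm_num, by omega, h2⟩

lemma r_compl_singleton [M.Finite] (hM : ThreeConnected M) (hx : x ∈ M.E)
    (hE : 3 ≤ M.E.ncard) : r M (M.E \ {x}) = r M M.E := by
  have hfinE := M.ground_finite
  refine le_antisymm (r_mono diff_subset) ?_
  by_contra hcon
  push_neg at hcon
  have hr1 : r M {x} ≤ 1 := by
    have := r_le_ncard (M := M) (finite_singleton x)
    simpa using this
  have hxE : {x} ⊆ M.E := singleton_subset_iff.2 hx
  have hlam0 : lam M {x} ≤ 0 := by unfold lam; omega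
  have hlamge : 0 ≤ lam M {x} := by unfold lam; have := r_compl_add hxE; omega
  have hcompl : (M.E \ {x}).ncard + ({x} : Set α).ncard = M.E.ncard :=
    ncard_diff_add_ncard_of_subset hxE hfinE
  refine hM 1 one_pos (by norm_num) {x} hxE ⟨by omega, by simp, ?_⟩
  simp only [ncard_singleton] at hcompl
  omega

lemma compl_closure_cocircuit [M.Finite] (hG : G ⊆ M.E)
    (hr : r M G = r M M.E - 1) : Circuit M✶ (M.E \ M.closure G) := by
  set H := M.closure G with hH
  have hHE : H ⊆ M.E := M.closure_subset_ground G
  have hrH : r M H = r M M.E - 1 := by rw [hH, r_closure]; exact hr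
  refine ⟨diff_subset.trans (by rw [dual_ground]), ?_, ?_⟩
  · intro hind
    rw [dual_indep_iff_exists diff_subset] at hind
    obtain ⟨B, hB, hdisj⟩ := hind
    have hBH : B ⊆ H := fun z hz => by
      by_contra hzH
      exact hdisj.ne_of_mem ⟨hB.subset_ground hz, hzH⟩ hz rfl
    have h1 : (B.ncard : ℤ) ≤ r M H := ncard_le_r hB.indep hBH
    have h2 := r_base hB
    omega
  · intro D' hss
    obtain ⟨z, hzD, hzD'⟩ := exists_of_ssubset hss
    have hzE : z ∈ M.E := hzD.1
    have hzH : z ∉ H := hzD.2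
    obtain ⟨I, hI⟩ := M.exists_isBasis H hHE
    have hIH : I ⊆ H := hI.subset
    have hclI : M.closure I = H := by
      rw [hI.closure_eq_closure, hH, closure_closure]
    have hzI : z ∉ I := fun h => hzH (hIH h)
    have hins : M.Indep (insert z I) := by
      rw [hI.indep.insert_indep_iff_of_notMem hzI]
      exact ⟨hzE, by rw [hclI]; exact hzH⟩
    have hIcard : (I.ncard : ℤ) = r M M.E - 1 := by
      rw [← r_eq_of_basis' hI.isBasis']; exact hrH
    have hBase : M.IsBase (insert z I) := by
      refine base_of_indep_r hins ?_
      rw [ncard_insert_of_notMem hzI (M.set_finite I hI.indep.subset_ground)]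
      push_cast
      omega
    have hind : M✶.Indep ((M.E \ H) \ {z}) := by
      rw [dual_indep_iff_exists ((diff_subset.trans diff_subset))]
      refine ⟨insert z I, hBase, ?_⟩
      rw [disjoint_iff_inter_eq_empty]
      ext w
      simp only [mem_inter_iff, mem_diff, mem_singleton_iff, mem_insert_iff, mem_empty_iff_false,
        iff_false, not_and]
      rintro ⟨⟨-, hwH⟩, hwz⟩ (rfl | hwI)
      · exact hwz rfl
      · exact hwH (hIH hwI)
    exact hind.subset (subset_diff_singleton hss.subset hzD')


variable {M : Matroid α} {C : Set α} {x y : α} {n : ℕ} {e : ℕ → α}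

lemma mem_closure_of_circuit (hC : Circuit M C) (hy : y ∈ C) : y ∈ M.closure (C \ {y}) :=
  r_circuit_le hC hy hy

lemma mem_closure_head3 {a b c : α} (hC : Circuit M {a, b, c}) (h1 : a ≠ b) (h2 : a ≠ c) :
    a ∈ M.closure {b, c} := by
  have h := mem_closure_of_circuit hC (show a ∈ ({a,b,c} : Set α) by simp)
  have hset : ({a, b, c} : Set α) \ {a} = {b, c} := by
    ext z
    simp only [mem_diff, mem_insert_iff, mem_singleton_iff]
    constructor
    · rintro ⟨rfl | rfl | rfl, hz⟩
      · exact absurd rfl hz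
      · exact Or.inl rfl
      · exact Or.inr rfl
    · rintro (rfl | rfl)
      · exact ⟨Or.inr (Or.inl rfl), fun h => h1 h.symm⟩
      · exact ⟨Or.inr (Or.inr rfl), fun h => h2 h.symm⟩
  rwa [hset] at h

lemma mem_closure_last3 {a b c : α} (hC : Circuit M {a, b, c}) (h1 : c ≠ a) (h2 : c ≠ b) :
    c ∈ M.closure {a, b} := by
  have : ({a, b, c} : Set α) = {c, a, b} := by ext z; simp; tauto
  rw [this] at hC
  exact mem_closure_head3 hC h1 h2

lemma mem_closure_head4 {a b c d : α} (hC : Circuit M {a, b, c, d}) (h1 : a ≠ b) (h2 : a ≠ c)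
    (h3 : a ≠ d) : a ∈ M.closure {b, c, d} := by
  have h := mem_closure_of_circuit hC (show a ∈ ({a,b,c,d} : Set α) by simp)
  have hset : ({a, b, c, d} : Set α) \ {a} = {b, c, d} := by
    ext z
    simp only [mem_diff, mem_insert_iff, mem_singleton_iff]
    constructor
    · rintro ⟨rfl | rfl | rfl | rfl, hz⟩
      · exact absurd rfl hz
      · exact Or.inl rfl
      · exact Or.inr (Or.inl rfl)
      · exact Or.inr (Or.inr rfl)
    · rintro (rfl | rfl | rfl)
      · exact ⟨Or.inr (Or.inl rfl), fun h => h1 h.symm⟩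
      · exact ⟨Or.inr (Or.inr (Or.inl rfl)), fun h => h2 h.symm⟩
      · exact ⟨Or.inr (Or.inr (Or.inr rfl)), fun h => h3 h.symm⟩
  rwa [hset] at h

lemma ncard_Iio (m : ℕ) : (Set.Iio m).ncard = m := by
  have : (Set.Iio m : Set ℕ) = ↑(Finset.range m) := by ext k; simp
  rw [this, ncard_coe_finset, Finset.card_range]

lemma fan_types (hfan : FanOrd M n e) (h0 : Triad M (tri e 0)) :
    ∀ k, k + 2 < n → (k % 2 = 0 → Triad M (tri e k)) ∧ (k % 2 = 1 → Triangle M (tri e k)) := by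
  intro k
  induction k with
  | zero => exact fun _ => ⟨fun _ => h0, fun h => by omega⟩
  | succ m IH =>
    intro hlt
    have hm := IH (by omega)
    have halt := hfan.2.2.2.2 m (by omega)
    constructor
    · intro hpar
      exact halt.1 (hm.2 (by omega))
    · intro hpar
      exact halt.2 (hm.1 (by omega))


lemma fan_extend_contra {M : Matroid α} {F : Set α} (hmax : MaximalFan M F) {m : ℕ} {e' : ℕ → α}
    (hfan' : FanOrd M m e') (hFsub : F ⊆ e' '' Set.Iio m) {x : α} (hx : x ∈ e' '' Set.Iio m)
    (hxF : x ∉ F) : False := by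
  have hisfan : IsFan M (e' '' Set.Iio m) := Or.inr ⟨m, e', hfan', rfl⟩
  have := hmax.2 _ hisfan hFsub
  rw [this] at hx
  exact hxF hx

end AuxLemmas

/-- If a maximal fan `F` (of size 2, or starting with a triad) admits a
4-element circuit `{e 0, e i, a, b}` with `i ∈ {1, 2}` and `a, b ∉ F`, then no
element outside `F ∪ C` lies in the coclosure of `F`. -/
theorem stmt17 (M : Matroid α) [M.Finite] (hM : ThreeConnected M)
    {n : ℕ} {e : ℕ → α} {F : Set α} (hn : 2 ≤ n)
    (hF : F = e '' Set.Iio n) (hFE : F ⊆ M.E)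
    (hinj : Set.InjOn e (Set.Iio n))
    (hcase : n = 2 ∨ (FanOrd M n e ∧ Triad M {e 0, e 1, e 2}))
    (hmax : MaximalFan M F)
    {a b : α} {i : ℕ} (hi : i = 1 ∨ i = 2) (hin : i < n)
    (ha : a ∉ F) (hb : b ∉ F)
    (hC : Circuit M {e 0, e i, a, b})
    (hCcard : ({e 0, e i, a, b} : Set α).ncard = 4) :
    ∀ x ∈ M.E \ (F ∪ {e 0, e i, a, b}), x ∉ M✶.closure F := by
  intro x hx hxcl
  obtain ⟨hxE, hxFC⟩ := hx
  have hxF : x ∉ F := fun h => hxFC (Or.inl h)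
  have hxC : x ∉ ({e 0, e i, a, b} : Set α) := fun h => hxFC (Or.inr h)
  have hfinE := M.ground_finite
  have hfinF : F.Finite := hfinE.subset hFE
  have heF : ∀ k, k < n → e k ∈ F := fun k hk => hF ▸ ⟨k, hk, rfl⟩
  have heE : ∀ k, k < n → e k ∈ M.E := fun k hk => hFE (heF k hk)
  have h0n : (0:ℕ) < n := by omega
  have hCE : ({e 0, e i, a, b} : Set α) ⊆ M.E := hC.1
  have haE : a ∈ M.E := hCE (by simp)
  have hbE : b ∈ M.E := hCE (by simp)
  have hxa : x ≠ a := fun h => hxC (by simp [h])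
  have hxb : x ≠ b := fun h => hxC (by simp [h])
  have hae : ∀ k, k < n → a ≠ e k := fun k hk h => ha (h ▸ heF k hk)
  have hbe : ∀ k, k < n → b ≠ e k := fun k hk h => hb (h ▸ heF k hk)
  have hab : a ≠ b := by
    intro h
    rw [h] at hCcard
    have h1 : ({e 0, e i, b, b} : Set α) = {e 0, e i, b} := by
      rw [Set.pair_eq_singleton]
    rw [h1] at hCcard
    have h2 : ({e 0, e i, b} : Set α).ncard ≤ 3 := by
      refine (ncard_insert_le _ _).trans ?_
      have := ncard_insert_le (e i) ({b} : Set α)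
      simp only [ncard_singleton] at this
      omega
    omega
  have h0i : e 0 ≠ e i := fun h => by
    have : (0:ℕ) = i := hinj (by simp [h0n]) (by simpa using hin) h
    omega
  have hFcard : F.ncard = n := by rw [hF, ncard_image_of_injOn hinj, ncard_Iio]
  have hEcard : n + 3 ≤ M.E.ncard := by
    have hsub : insert x (insert a (insert b F)) ⊆ M.E := by
      intro z hz
      rcases hz with rfl | rfl | rfl | hz
      exacts [hxE, haE, hbE, hFE hz]
    have hfin3 : (insert a (insert b F)).Finite := (hfinF.insert b).insert a
    have hcard : (insert x (insert a (insert b F))).ncard = n + 3 := by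
      rw [ncard_insert_of_notMem (by
        simp only [mem_insert_iff]
        push_neg
        exact ⟨hxa, hxb, hxF⟩) hfin3,
        ncard_insert_of_notMem (by
          simp only [mem_insert_iff]
          push_neg
          exact ⟨hab, ha⟩) (hfinF.insert b),
        ncard_insert_of_notMem hb hfinF, hFcard]
    calc n + 3 = (insert x (insert a (insert b F))).ncard := hcard.symm
      _ ≤ M.E.ncard := ncard_le_ncard hsub hfinE
  have hE5 : 5 ≤ M.E.ncard := by omega
  -- the complement W and its closure V
  set W : Set α := M.E \ (F ∪ {x}) with hWdef
  have hWE : W ⊆ M.E := diff_subset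
  have haW : a ∈ W := ⟨haE, by
    rintro (h | h)
    · exact ha h
    · exact hxa (mem_singleton_iff.1 h).symm⟩
  have hbW : b ∈ W := ⟨hbE, by
    rintro (h | h)
    · exact hb h
    · exact hxb (mem_singleton_iff.1 h).symm⟩
  set V : Set α := M.closure W with hVdef
  have hVE : V ⊆ M.E := M.closure_subset_ground W
  have hWV : W ⊆ V := M.subset_closure W hWE
  set t : ℕ := (n - 1) / 2 with htdef
  -- triads of the fan
  have htriads : ∀ j, j < t → Triad M (tri e (2 * j)) := by
    intro j hj
    rcases hcase with hn2 | ⟨hfan, htriad0⟩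
    · omega
    · have h2 : 2 * j + 2 < n := by omega
      have h0' : Triad M (tri e 0) := by
        have : tri e 0 = {e 0, e 1, e 2} := rfl
        rw [this]
        exact htriad0
      exact (fan_types hfan h0' (2 * j) h2).1 (by omega)
  have htris : ∀ k, k % 2 = 1 → k + 2 < n → Triangle M (tri e k) := by
    intro k hk1 hk2
    rcases hcase with hn2 | ⟨hfan, htriad0⟩
    · omega
    · have h0' : Triad M (tri e 0) := by
        have : tri e 0 = {e 0, e 1, e 2} := rfl
        rw [this]
        exact htriad0
      exact (fan_types hfan h0' k hk2).2 hk1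
  -- distinctness within the fan
  have hne : ∀ k l, k < n → l < n → k ≠ l → e k ≠ e l :=
    fun k l hk hl hkl h => hkl (hinj (by simpa using hk) (by simpa using hl) h)
  -- dual rank bound
  set Didx : Set ℕ := (fun j => 2 * j) '' Set.Iio t with hDidxdef
  set K : Set α := e '' (Set.Iio n \ Didx) with hKdef
  have hKE : K ⊆ M.E := by
    rintro z ⟨k, hk, rfl⟩
    exact heE k hk.1
  have hKdE : K ⊆ M✶.E := by rw [dual_ground]; exact hKE
  have hoddK : ∀ k, k < n → k % 2 = 1 → e k ∈ K := by
    intro k hk hodd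
    refine ⟨k, ⟨hk, ?_⟩, rfl⟩
    rintro ⟨j, -, h⟩
    have h' : 2 * j = k := h
    omega
  have hKcl : ∀ k, k < n → e k ∈ M✶.closure K := by
    have hdirect : ∀ k, k < n → k ∉ Didx → e k ∈ M✶.closure K :=
      fun k hk hkD => M✶.subset_closure K hKdE ⟨k, ⟨hk, hkD⟩, rfl⟩
    have hmain : ∀ p k, n - k ≤ p → k < n → e k ∈ M✶.closure K := by
      intro p
      induction p with
      | zero => intro k hp hk; omega
      | succ q IH =>
        intro k hp hk
        by_cases hkD : k ∈ Didx
        · obtain ⟨j, hj, hjk⟩ := hkD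
          simp only [mem_Iio] at hj
          have hjk' : 2 * j = k := hjk
          subst hjk'
          have hk2 : 2 * j + 2 < n := by omega
          have htriad := htriads j hj
          have hne1 : e (2*j) ≠ e (2*j+1) := hne _ _ (by omega) (by omega) (by omega)
          have hne2 : e (2*j) ≠ e (2*j+2) := hne _ _ (by omega) (by omega) (by omega)
          have hmem : e (2*j) ∈ M✶.closure {e (2*j+1), e (2*j+2)} := by
            have := mem_closure_head3 (M := M✶) ?_ hne1 hne2
            · exact this
            · have htr : tri e (2*j) = {e (2*j), e (2*j+1), e (2*j+2)} := rfl
              have := htriad.1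
              rwa [htr] at this
          have hsub : ({e (2*j+1), e (2*j+2)} : Set α) ⊆ M✶.closure K := by
            rintro z (rfl | rfl)
            · exact hdirect _ (by omega) (by
                rintro ⟨j', -, h⟩
                have h' : 2 * j' = 2 * j + 1 := h
                omega)
            · exact IH (2*j+2) (by omega) (by omega)
          exact closure_subset_closure_of_subset_closure hsub hmem
        · exact hdirect k hk hkD
    exact fun k hk => hmain n k (by omega) hk
  have hFK : F ⊆ M✶.closure K := by
    rintro z hz
    rw [hF] at hz
    obtain ⟨k, hk, rfl⟩ := hz
    exact hKcl k hk
  have hFxK : F ∪ {x} ⊆ M✶.closure K := by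
    rintro z (hz | rfl)
    · exact hFK hz
    · exact closure_subset_closure_of_subset_closure hFK hxcl
  have hKcard : (K.ncard : ℤ) ≤ (n : ℤ) - t := by
    have hDsub : Didx ⊆ Set.Iio n := by
      rintro k ⟨j, hj, rfl⟩
      simp only [mem_Iio] at hj ⊢
      omega
    have hDcard : Didx.ncard = t := by
      rw [hDidxdef, ncard_image_of_injective _ (fun j1 j2 h => by omega), ncard_Iio]
    have hKidx : (Set.Iio n \ Didx).ncard = n - t := by
      rw [ncard_diff hDsub ((finite_Iio n).subset hDsub), hDcard, ncard_Iio]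
    have h1 : K.ncard ≤ n - t := hKidx ▸ ncard_image_le ((finite_Iio n).diff)
    have h2 : t ≤ n := by omega
    omega
  have hwb : r M W ≤ r M M.E - t - 1 := by
    have hFxE : F ∪ {x} ⊆ M.E := union_subset hFE (by simpa using hxE)
    have hdual := r_dual (M := M) hFxE
    have hrK : r M✶ (F ∪ {x}) ≤ (n : ℤ) - t := by
      have h1 : r M✶ (F ∪ {x}) ≤ r M✶ K := r_le_of_subset_closure hFxK
      have h2 : r M✶ K ≤ (K.ncard : ℤ) := r_le_ncard (hfinE.subset hKE)
      omega
    have hcardFx : (F ∪ {x}).ncard = n + 1 := by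
      rw [union_singleton, ncard_insert_of_notMem hxF hfinF, hFcard]
    rw [hcardFx] at hdual
    have hWW : M.E \ (F ∪ {x}) = W := rfl
    rw [hWW] at hdual
    push_cast at hdual
    omega
  -- now case analysis
  by_cases hn2 : n = 2
  · subst hn2
    have hi1 : i = 1 := by omega
    subst hi1
    have hFeq : F = {e 0, e 1} := by
      rw [hF]
      ext z
      simp only [mem_image, mem_Iio, mem_insert_iff, mem_singleton_iff]
      constructor
      · rintro ⟨k, hk, rfl⟩
        rcases (by omega : k = 0 ∨ k = 1) with rfl | rfl
        · exact Or.inl rfl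
        · exact Or.inr rfl
      · rintro (rfl | rfl)
        · exact ⟨0, by omega, rfl⟩
        · exact ⟨1, by omega, rfl⟩
    have he0cl : e 0 ∈ M.closure {e 1, a, b} :=
      mem_closure_head4 hC h0i (hae 0 (by omega)).symm (hbe 0 (by omega)).symm
    have hsube1 : M.E \ {x} ⊆ M.closure (V ∪ {e 1}) := by
      intro z hz
      have hVsub : V ⊆ M.closure (V ∪ {e 1}) :=
        (M.subset_closure V hVE).trans (M.closure_subset_closure subset_union_left)
      by_cases hzF : z ∈ F
      · rw [hFeq] at hzF
        rcases hzF with rfl | rfl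
        · refine M.closure_subset_closure_of_subset_closure ?_ he0cl
          refine insert_subset ?_ (insert_subset (hVsub (hWV haW))
            (singleton_subset_iff.2 (hVsub (hWV hbW))))
          exact M.subset_closure _ (union_subset hVE (by simpa using heE 1 (by omega)))
            (Or.inr rfl)
        · exact M.subset_closure _ (union_subset hVE (by simpa using heE 1 (by omega)))
            (Or.inr rfl)
      · have hzW : z ∈ W := ⟨hz.1, by
          rintro (h | h)
          · exact hzF h
          · exact hz.2 h⟩
        exact hVsub (hWV hzW)
    have hrV : r M V = r M M.E - 1 := by
      have hupper : r M V ≤ r M M.E - 1 := by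
        have : r M V = r M W := r_closure W
        omega
      have hlower : r M M.E - 1 ≤ r M V := by
        have h1 : r M (M.E \ {x}) = r M M.E := r_compl_singleton hM hxE (by omega)
        have h2 : r M (M.E \ {x}) ≤ r M (V ∪ {e 1}) := r_le_of_subset_closure hsube1
        have h3 : r M (V ∪ {e 1}) ≤ r M V + ({e 1} : Set α).ncard :=
          r_union_ncard_le hVE (by simpa using heE 1 (by omega))
        simp only [ncard_singleton] at h3
        push_cast at h3
        omega
      omega
    have hD0 := compl_closure_cocircuit hVE hrV
    have hD0sub : M.E \ M.closure V ⊆ {e 0, e 1, x} := by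
      intro z hz
      have hzV : z ∉ V := fun h => hz.2 (M.subset_closure V hVE h)
      have hzW : z ∉ W := fun h => hzV (hWV h)
      have : z ∈ F ∪ {x} := by
        by_contra hcon
        exact hzW ⟨hz.1, hcon⟩
      rcases this with hzF | rfl
      · rw [hFeq] at hzF
        rcases hzF with rfl | rfl
        · exact Or.inl rfl
        · exact Or.inr (Or.inl rfl)
      · exact Or.inr (Or.inr rfl)
    have hcc3 : 3 ≤ (M.E \ M.closure V).ncard := cocircuit_three hM hD0 (by omega)
    have hTcard : ({e 0, e 1, x} : Set α).ncard ≤ 3 := by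
      refine (ncard_insert_le _ _).trans ?_
      have := ncard_insert_le (e 1) ({x} : Set α)
      simp only [ncard_singleton] at this
      omega
    have hfinT : ({e 0, e 1, x} : Set α).Finite :=
      ((finite_singleton x).insert (e 1)).insert (e 0)
    have hD0eq : M.E \ M.closure V = {e 0, e 1, x} :=
      eq_of_subset_of_ncard_le hD0sub (by omega) hfinT
    have htriadT : Triad M {e 0, e 1, x} := by
      refine ⟨?_, ?_⟩
      · rw [← hD0eq]
        exact hD0
      · have h3 : 3 ≤ ({e 0, e 1, x} : Set α).ncard := hD0eq ▸ hcc3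
        omega
    have hfan' : FanOrd M 3 (fun j => if j = 2 then x else e j) := by
      refine ⟨le_refl 3, ?_, ?_, ?_, ?_⟩
      · intro p hp q hq hpq
        simp only [mem_Iio] at hp hq
        simp only [] at hpq
        split_ifs at hpq with h1 h2 h2
        · omega
        · exact absurd (hpq.symm ▸ heF q (by omega)) hxF
        · exact absurd (hpq ▸ heF p (by omega)) hxF
        · exact hinj (by simp only [mem_Iio]; omega) (by simp only [mem_Iio]; omega) hpq
      · intro j hj
        simp only []
        split_ifs with h2
        · exact hxE
        · exact heE j (by omega)
      · right
        have heval : tri (fun j => if j = 2 then x else e j) 0 = {e 0, e 1, x} := by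
          simp [tri]
        rw [heval]
        exact htriadT
      · intro j hj
        exact absurd hj (by omega)
    have hFsub : F ⊆ (fun j => if j = 2 then x else e j) '' Set.Iio 3 := by
      rw [hFeq]
      rintro z (rfl | rfl)
      · exact ⟨0, by simp, by norm_num⟩
      · exact ⟨1, by simp, by norm_num⟩
    exact fan_extend_contra hmax hfan' hFsub ⟨2, by simp, by norm_num⟩ hxF
  · have hn3 : 3 ≤ n := by omega
    obtain ⟨hfan, htriad0⟩ := hcase.resolve_left hn2
    by_cases hsp : i = 2 ∧ n ≤ 4
    · obtain ⟨rfl, hn4⟩ := hsp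
      have he0cl : e 0 ∈ M.closure {e 2, a, b} :=
        mem_closure_head4 hC h0i (hae 0 h0n).symm (hbe 0 h0n).symm
      set A : Set α := {e 0, e 2} with hAdef
      have hAE : A ⊆ M.E := by
        rintro z (rfl | rfl)
        · exact heE 0 (by omega)
        · exact heE 2 (by omega)
      have hGE : V ∪ A ⊆ M.E := union_subset hVE hAE
      have he2E : e 2 ∈ M.E := heE 2 (by omega)
      have he1E : e 1 ∈ M.E := heE 1 (by omega)
      have hupper : r M (V ∪ A) ≤ r M M.E - 1 := by
        have hbase : V ∪ {e 2} ⊆ M.E := union_subset hVE (by simpa using he2E)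
        have h1 : V ∪ A ⊆ M.closure (V ∪ {e 2}) := by
          rintro z (hz | rfl | rfl)
          · exact M.subset_closure _ hbase (Or.inl hz)
          · refine closure_subset_closure_of_subset_closure ?_ he0cl
            refine insert_subset (M.subset_closure _ hbase (Or.inr rfl))
              (insert_subset (M.subset_closure _ hbase (Or.inl (hWV haW)))
                (singleton_subset_iff.2 (M.subset_closure _ hbase (Or.inl (hWV hbW)))))
          · exact M.subset_closure _ hbase (Or.inr rfl)
        have h2 : r M (V ∪ A) ≤ r M (V ∪ {e 2}) := r_le_of_subset_closure h1
        have h3 : r M (V ∪ {e 2}) ≤ r M V + ({e 2} : Set α).ncard :=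
          r_union_ncard_le hVE (by simpa using he2E)
        have h4 : r M V = r M W := r_closure W
        simp only [ncard_singleton] at h3
        push_cast at h3
        omega
      have hlower : r M M.E - 1 ≤ r M (V ∪ A) := by
        have hbase : (V ∪ A) ∪ {e 1} ⊆ M.E := union_subset hGE (by simpa using he1E)
        have hsubcl : M.E \ {x} ⊆ M.closure ((V ∪ A) ∪ {e 1}) := by
          intro z hz
          by_cases hzF : z ∈ F
          · rw [hF] at hzF
            obtain ⟨k, hk, rfl⟩ := hzF
            simp only [mem_Iio] at hk
            rcases (by omega : k = 0 ∨ k = 1 ∨ k = 2 ∨ (k = 3 ∧ n = 4)) with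
              rfl | rfl | rfl | ⟨rfl, hn4'⟩
            · exact M.subset_closure _ hbase (Or.inl (Or.inr (Or.inl rfl)))
            · exact M.subset_closure _ hbase (Or.inr rfl)
            · exact M.subset_closure _ hbase (Or.inl (Or.inr (Or.inr rfl)))
            · have htri := htris 1 (by omega) (by omega)
              have hcir : Circuit M {e 1, e 2, e 3} := htri.1
              have hmem : e 3 ∈ M.closure {e 1, e 2} :=
                mem_closure_last3 hcir (hne _ _ (by omega) (by omega) (by omega))
                  (hne _ _ (by omega) (by omega) (by omega))
              refine closure_subset_closure_of_subset_closure ?_ hmem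
              refine insert_subset (M.subset_closure _ hbase (Or.inr rfl))
                (singleton_subset_iff.2
                  (M.subset_closure _ hbase (Or.inl (Or.inr (Or.inr rfl)))))
          · have hzW : z ∈ W := ⟨hz.1, by
              rintro (h | h)
              · exact hzF h
              · exact hz.2 h⟩
            exact M.subset_closure _ hbase (Or.inl (Or.inl (hWV hzW)))
        have h1 : r M (M.E \ {x}) = r M M.E := r_compl_singleton hM hxE (by omega)
        have h2 := r_le_of_subset_closure hsubcl
        have h3 : r M ((V ∪ A) ∪ {e 1}) ≤ r M (V ∪ A) + ({e 1} : Set α).ncard :=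
          r_union_ncard_le hGE (by simpa using he1E)
        simp only [ncard_singleton] at h3
        push_cast at h3
        omega
      have hrG : r M (V ∪ A) = r M M.E - 1 := le_antisymm hupper hlower
      have hD0 := compl_closure_cocircuit hGE hrG
      have hcc3 := cocircuit_three hM hD0 (by omega)
      have hD0sub' : ∀ z ∈ M.E \ M.closure (V ∪ A),
          z = x ∨ ∃ k, k ≠ 0 ∧ k ≠ 2 ∧ k < n ∧ z = e k := by
        intro z hz
        have hzVA : z ∉ V ∪ A := fun h => hz.2 (M.subset_closure _ hGE h)
        have hzW : z ∉ W := fun h => hzVA (Or.inl (hWV h))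
        have hzFx : z ∈ F ∪ {x} := by
          by_contra hcon
          exact hzW ⟨hz.1, hcon⟩
        rcases hzFx with hzF | hzx
        · rw [hF] at hzF
          obtain ⟨k, hk, rfl⟩ := hzF
          simp only [mem_Iio] at hk
          refine Or.inr ⟨k, ?_, ?_, hk, rfl⟩
          · intro h
            rw [h] at hzVA
            exact hzVA (Or.inr (Or.inl rfl))
          · intro h
            rw [h] at hzVA
            exact hzVA (Or.inr (Or.inr rfl))
        · exact Or.inl hzx
      rcases (by omega : n = 3 ∨ n = 4) with rfl | rfl
      · -- n = 3 : cocircuit inside {e 1, x}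
        have hD0sub : M.E \ M.closure (V ∪ A) ⊆ {e 1, x} := by
          intro z hz
          rcases hD0sub' z hz with rfl | ⟨k, hk0, hk2, hkn, rfl⟩
          · exact Or.inr rfl
          · have : k = 1 := by omega
            subst this
            exact Or.inl rfl
        have hle : (M.E \ M.closure (V ∪ A)).ncard ≤ 2 := by
          refine (ncard_le_ncard hD0sub ((finite_singleton x).insert _)).trans ?_
          have := ncard_insert_le (e 1) ({x} : Set α)
          simp only [ncard_singleton] at this
          omega
        omega
      · -- n = 4 : triad {e 1, e 3, x} and reordered fan extension
        have hD0sub : M.E \ M.closure (V ∪ A) ⊆ {e 1, e 3, x} := by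
          intro z hz
          rcases hD0sub' z hz with rfl | ⟨k, hk0, hk2, hkn, rfl⟩
          · exact Or.inr (Or.inr rfl)
          · rcases (by omega : k = 1 ∨ k = 3) with rfl | rfl
            · exact Or.inl rfl
            · exact Or.inr (Or.inl rfl)
        have hfinT : ({e 1, e 3, x} : Set α).Finite :=
          ((finite_singleton x).insert _).insert _
        have hTcard : ({e 1, e 3, x} : Set α).ncard ≤ 3 := by
          refine (ncard_insert_le _ _).trans ?_
          have := ncard_insert_le (e 3) ({x} : Set α)
          simp only [ncard_singleton] at this
          omega
        have hD0eq : M.E \ M.closure (V ∪ A) = {e 1, e 3, x} :=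
          eq_of_subset_of_ncard_le hD0sub (by omega) hfinT
        have htriadT : Triad M {e 1, e 3, x} := by
          refine ⟨?_, ?_⟩
          · rw [← hD0eq]
            exact hD0
          · have h3 : 3 ≤ ({e 1, e 3, x} : Set α).ncard := hD0eq ▸ hcc3
            omega
        set e' : ℕ → α := fun j =>
          if j = 0 then e 0 else if j = 1 then e 2 else if j = 2 then e 1
            else if j = 3 then e 3 else x with he'def
        have he'0 : e' 0 = e 0 := rfl
        have he'1 : e' 1 = e 2 := rfl
        have he'2 : e' 2 = e 1 := rfl
        have he'3 : e' 3 = e 3 := rfl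
        have he'4 : e' 4 = x := rfl
        have htau1 : Triangle M {e 1, e 2, e 3} := by
          have htri := htris 1 (by omega) (by omega)
          exact htri
        have hfan' : FanOrd M 5 e' := by
          refine ⟨by omega, ?_, ?_, ?_, ?_⟩
          · intro u hu v hv huv
            simp only [mem_Iio] at hu hv
            interval_cases u <;> interval_cases v <;>
              simp only [he'0, he'1, he'2, he'3, he'4] at huv <;>
              first
                | rfl
                | exact absurd huv (by apply hne <;> omega)
                | exact absurd (huv ▸ heF _ (by omega)) hxF
                | exact absurd (huv.symm ▸ heF _ (by omega)) hxF
          · intro j hj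
            interval_cases j
            · exact he'0 ▸ heE 0 (by omega)
            · exact he'1 ▸ he2E
            · exact he'2 ▸ he1E
            · exact he'3 ▸ heE 3 (by omega)
            · exact he'4 ▸ hxE
          · right
            have h1 : tri e' 0 = {e 0, e 2, e 1} := by
              unfold tri
              rw [show (0:ℕ)+1 = 1 from rfl, show (0:ℕ)+2 = 2 from rfl, he'0, he'1, he'2]
            have h2 : ({e 0, e 2, e 1} : Set α) = {e 0, e 1, e 2} := by
              rw [Set.pair_comm (e 2) (e 1)]
            rw [h1, h2]
            exact htriad0
          · have h1 : tri e' 0 = {e 0, e 1, e 2} := by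
              unfold tri
              rw [show (0:ℕ)+1 = 1 from rfl, show (0:ℕ)+2 = 2 from rfl, he'0, he'1, he'2,
                Set.pair_comm (e 2) (e 1)]
            have h2 : tri e' 1 = {e 1, e 2, e 3} := by
              unfold tri
              rw [show (1:ℕ)+1 = 2 from rfl, show (1:ℕ)+2 = 3 from rfl, he'1, he'2, he'3,
                Set.insert_comm (e 2) (e 1)]
            have h3 : tri e' 2 = {e 1, e 3, x} := by
              unfold tri
              rw [show (2:ℕ)+1 = 3 from rfl, show (2:ℕ)+2 = 4 from rfl, he'2, he'3, he'4]
            intro j hj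
            rcases (by omega : j = 0 ∨ j = 1) with rfl | rfl
            · constructor
              · intro htgl
                rw [h1] at htgl
                exact (not_triangle_triad hM htgl.1 htriad0.1 htgl.2 hE5).elim
              · intro _
                rw [h2]
                exact htau1
            · constructor
              · intro _
                rw [h3]
                exact htriadT
              · intro htd
                rw [h2] at htd
                exact (not_triangle_triad hM htau1.1 htd.1 htau1.2 hE5).elim
        have hFsub : F ⊆ e' '' Set.Iio 5 := by
          intro z hz
          rw [hF] at hz
          obtain ⟨k, hk, rfl⟩ := hz
          simp only [mem_Iio] at hk
          rcases (by omega : k = 0 ∨ k = 1 ∨ k = 2 ∨ k = 3) with rfl | rfl | rfl | rfl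
          · exact ⟨0, by simp only [mem_Iio]; omega, he'0⟩
          · exact ⟨2, by simp only [mem_Iio]; omega, he'2⟩
          · exact ⟨1, by simp only [mem_Iio]; omega, he'1⟩
          · exact ⟨3, by simp only [mem_Iio]; omega, he'3⟩
        exact fan_extend_contra hmax hfan' hFsub
          ⟨4, by simp only [mem_Iio]; omega, he'4⟩ hxF
    · -- generic scenario: i = 1 (any n ≥ 3), or i = 2 with n ≥ 5
      set p : ℕ := n % 2 with hpdef
      set q : ℕ := n - 3 + p with hqdef
      set S : Set α := e '' ((fun j => 2*j + 2) '' Set.Iio (t - 1) ∪ {q}) with hSdef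
      have hSidxsub : ∀ k ∈ ((fun j => 2*j + 2) '' Set.Iio (t - 1) ∪ {q} : Set ℕ),
          k < n - 2 + p ∧ 1 ≤ k := by
        rintro k (⟨j, hj, hjk⟩ | rfl)
        · have hjk' : 2*j + 2 = k := hjk
          simp only [mem_Iio] at hj
          omega
        · omega
      have hSE : S ⊆ M.E := by
        rintro z ⟨k, hk, rfl⟩
        exact heE k (by have := hSidxsub k hk; omega)
      have hVS : V ∪ S ⊆ M.E := union_subset hVE hSE
      have hevenS : ∀ k, 2 ≤ k → k % 2 = 0 → k < n - 2 + p → e k ∈ S := by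
        intro k h2 hpar hk
        refine ⟨k, Or.inl ⟨(k-2)/2, by simp only [mem_Iio]; omega, ?_⟩, rfl⟩
        show 2 * ((k-2)/2) + 2 = k
        omega
      have hqS : e q ∈ S := ⟨q, Or.inr rfl, rfl⟩
      have hkeyP : ∀ m k, q - k ≤ m → k % 2 = 1 → k ≤ q → e k ∈ M.closure (V ∪ S) := by
        intro m
        induction m with
        | zero =>
          intro k hm hpar hkq
          have hkq' : k = q := by omega
          subst hkq'
          exact M.subset_closure _ hVS (Or.inr hqS)
        | succ m IH =>
          intro k hm hpar hkq
          by_cases hkq' : k = q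
          · subst hkq'
            exact M.subset_closure _ hVS (Or.inr hqS)
          · have hk2 : k + 2 < n := by omega
            have htri := htris k hpar hk2
            have hmem : e k ∈ M.closure {e (k+1), e (k+2)} := by
              refine mem_closure_head3 ?_ (hne _ _ (by omega) (by omega) (by omega))
                (hne _ _ (by omega) (by omega) (by omega))
              exact htri.1
            refine closure_subset_closure_of_subset_closure ?_ hmem
            rintro z (rfl | rfl)
            · exact M.subset_closure _ hVS
                (Or.inr (hevenS (k+1) (by omega) (by omega) (by omega)))
            · exact IH (k+2) (by omega) (by omega) (by omega)
      have hicl : e i ∈ M.closure (V ∪ S) := by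
        rcases hi with rfl | rfl
        · exact hkeyP q 1 (by omega) (by omega) (by omega)
        · have hn5 : 5 ≤ n := by
            rcases (by omega : n ≤ 4 ∨ 5 ≤ n) with h | h
            · exact absurd ⟨rfl, h⟩ hsp
            · exact h
          exact M.subset_closure _ hVS
            (Or.inr (hevenS 2 (by omega) (by omega) (by omega)))
      have he0cl : e 0 ∈ M.closure (V ∪ S) := by
        have h4 : e 0 ∈ M.closure {e i, a, b} :=
          mem_closure_head4 hC h0i (hae 0 h0n).symm (hbe 0 h0n).symm
        refine closure_subset_closure_of_subset_closure ?_ h4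
        refine insert_subset hicl (insert_subset ?_ (singleton_subset_iff.2 ?_))
        · exact M.subset_closure _ hVS (Or.inl (hWV haW))
        · exact M.subset_closure _ hVS (Or.inl (hWV hbW))
      have hAcl : ∀ k, k < n - 2 + p → e k ∈ M.closure (V ∪ S) := by
        intro k hk
        by_cases hk0 : k = 0
        · subst hk0
          exact he0cl
        · rcases Nat.mod_two_eq_zero_or_one k with hpar | hpar
          · exact M.subset_closure _ hVS (Or.inr (hevenS k (by omega) hpar hk))
          · exact hkeyP q k (by omega) hpar (by omega)
      set A : Set α := e '' Set.Iio (n - 2 + p) with hAdef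
      have hAE : A ⊆ M.E := by
        rintro z ⟨k, hk, rfl⟩
        simp only [mem_Iio] at hk
        exact heE k (by omega)
      have hGE : V ∪ A ⊆ M.E := union_subset hVE hAE
      have hScard : (S.ncard : ℤ) ≤ (t : ℤ) := by
        have h1 : S.ncard ≤ (((fun j => 2*j + 2) '' Set.Iio (t - 1) ∪ {q}) : Set ℕ).ncard :=
          ncard_image_le (((finite_Iio _).image _).union (finite_singleton q))
        have h2 : (((fun j => 2*j + 2) '' Set.Iio (t - 1) ∪ {q}) : Set ℕ).ncard ≤ (t - 1) + 1 := by
          refine (ncard_union_le _ _).trans ?_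
          have h3 := ncard_image_le (s := Set.Iio (t - 1)) (f := fun j => 2*j + 2) (finite_Iio _)
          rw [ncard_Iio] at h3
          simp only [ncard_singleton]
          omega
        have ht1 : 1 ≤ t := by omega
        omega
      have hupper : r M (V ∪ A) ≤ r M M.E - 1 := by
        have h1 : V ∪ A ⊆ M.closure (V ∪ S) := by
          rintro z (hz | ⟨k, hk, rfl⟩)
          · exact M.subset_closure _ hVS (Or.inl hz)
          · exact hAcl k (by simpa using hk)
        have h2 : r M (V ∪ A) ≤ r M (V ∪ S) := r_le_of_subset_closure h1
        have h3 : r M (V ∪ S) ≤ r M V + (S.ncard : ℤ) := r_union_ncard_le hVE hSE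
        have h4 : r M V = r M W := r_closure W
        omega
      have husub : e (n - 2 + p) ∈ M.E := heE _ (by omega)
      have hlower : r M M.E - 1 ≤ r M (V ∪ A) := by
        have hsubcl : M.E \ {x} ⊆ M.closure ((V ∪ A) ∪ {e (n - 2 + p)}) := by
          intro z hz
          have hbase : (V ∪ A) ∪ {e (n - 2 + p)} ⊆ M.E :=
            union_subset hGE (singleton_subset_iff.2 husub)
          by_cases hzF : z ∈ F
          · rw [hF] at hzF
            obtain ⟨k, hk, rfl⟩ := hzF
            simp only [mem_Iio] at hk
            by_cases hklt : k < n - 2 + p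
            · exact M.subset_closure _ hbase (Or.inl (Or.inr ⟨k, by simpa using hklt, rfl⟩))
            · by_cases hku : k = n - 2 + p
              · subst hku
                exact M.subset_closure _ hbase (Or.inr rfl)
              · -- k = n - 1 and p = 0
                have hp0 : p = 0 := by omega
                have hkn1 : k = n - 1 := by omega
                subst hkn1
                have htri := htris (n - 3) (by omega) (by omega)
                have hmem : e (n - 1) ∈ M.closure {e (n - 3), e (n - 2)} := by
                  have h1 : n - 3 + 1 = n - 2 := by omega
                  have h2 : n - 3 + 2 = n - 1 := by omega
                  have hcir := htri.1
                  unfold tri at hcir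
                  rw [h1, h2] at hcir
                  exact mem_closure_last3 hcir (hne _ _ (by omega) (by omega) (by omega))
                    (hne _ _ (by omega) (by omega) (by omega))
                refine closure_subset_closure_of_subset_closure ?_ hmem
                refine insert_subset ?_ (singleton_subset_iff.2 ?_)
                · exact M.subset_closure _ hbase
                    (Or.inl (Or.inr ⟨n - 3, by simp only [mem_Iio]; omega, rfl⟩))
                · refine M.subset_closure _ hbase (Or.inr ?_)
                  have : n - 2 + p = n - 2 := by omega
                  rw [this]
                  rfl
          · have hzW : z ∈ W := ⟨hz.1, by
              rintro (h | h)
              · exact hzF h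
              · exact hz.2 h⟩
            exact M.subset_closure _ hbase (Or.inl (Or.inl (hWV hzW)))
        have h1 : r M (M.E \ {x}) = r M M.E := r_compl_singleton hM hxE (by omega)
        have h2 : r M (M.E \ {x}) ≤ r M ((V ∪ A) ∪ {e (n - 2 + p)}) :=
          r_le_of_subset_closure hsubcl
        have h3 : r M ((V ∪ A) ∪ {e (n - 2 + p)}) ≤ r M (V ∪ A) + ({e (n - 2 + p)} : Set α).ncard :=
          r_union_ncard_le hGE (singleton_subset_iff.2 husub)
        simp only [ncard_singleton] at h3
        push_cast at h3
        omega
      have hrG : r M (V ∪ A) = r M M.E - 1 := le_antisymm hupper hlower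
      have hD0 := compl_closure_cocircuit hGE hrG
      have hcc3 := cocircuit_three hM hD0 (by omega)
      have hD0sub' : ∀ z ∈ M.E \ M.closure (V ∪ A), z = x ∨ ∃ k, ¬ (k < n - 2 + p) ∧ k < n ∧ z = e k := by
        intro z hz
        have hzVA : z ∉ V ∪ A := fun h => hz.2 (M.subset_closure _ hGE h)
        have hzW : z ∉ W := fun h => hzVA (Or.inl (hWV h))
        have hzFx : z ∈ F ∪ {x} := by
          by_contra hcon
          exact hzW ⟨hz.1, hcon⟩
        rcases hzFx with hzF | hzx
        · rw [hF] at hzF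
          obtain ⟨k, hk, rfl⟩ := hzF
          simp only [mem_Iio] at hk
          refine Or.inr ⟨k, fun hklt => hzVA (Or.inr ⟨k, by simpa using hklt, rfl⟩), hk, rfl⟩
        · exact Or.inl hzx
      rcases (by omega : p = 1 ∨ p = 0) with hp1 | hp0
      · -- n odd : cocircuit inside {e (n-1), x} : contradiction
        have hD0sub : M.E \ M.closure (V ∪ A) ⊆ {e (n-1), x} := by
          intro z hz
          rcases hD0sub' z hz with rfl | ⟨k, hk1, hk2, rfl⟩
          · exact Or.inr rfl
          · have : k = n - 1 := by omega
            subst this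
            exact Or.inl rfl
        have hle : (M.E \ M.closure (V ∪ A)).ncard ≤ 2 := by
          refine (ncard_le_ncard hD0sub ((finite_singleton x).insert _)).trans ?_
          have := ncard_insert_le (e (n-1)) ({x} : Set α)
          simp only [ncard_singleton] at this
          omega
        omega
      · -- n even : triad {e (n-2), e (n-1), x} and fan extension
        have hD0sub : M.E \ M.closure (V ∪ A) ⊆ {e (n-2), e (n-1), x} := by
          intro z hz
          rcases hD0sub' z hz with rfl | ⟨k, hk1, hk2, rfl⟩
          · exact Or.inr (Or.inr rfl)
          · rcases (by omega : k = n - 2 ∨ k = n - 1) with rfl | rfl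
            · exact Or.inl rfl
            · exact Or.inr (Or.inl rfl)
        have hfinT : ({e (n-2), e (n-1), x} : Set α).Finite :=
          ((finite_singleton x).insert _).insert _
        have hTcard : ({e (n-2), e (n-1), x} : Set α).ncard ≤ 3 := by
          refine (ncard_insert_le _ _).trans ?_
          have := ncard_insert_le (e (n-1)) ({x} : Set α)
          simp only [ncard_singleton] at this
          omega
        have hD0eq : M.E \ M.closure (V ∪ A) = {e (n-2), e (n-1), x} :=
          eq_of_subset_of_ncard_le hD0sub (by omega) hfinT
        have htriadT : Triad M {e (n-2), e (n-1), x} := by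
          refine ⟨?_, ?_⟩
          · rw [← hD0eq]
            exact hD0
          · have h3 : 3 ≤ ({e (n-2), e (n-1), x} : Set α).ncard := hD0eq ▸ hcc3
            omega
        -- extension fan
        set e' : ℕ → α := fun j => if j = n then x else e j with he'def
        have he'lt : ∀ k, k < n → e' k = e k := fun k hk => if_neg (by omega)
        have he'n : e' n = x := if_pos rfl
        have htrieq : ∀ j, j + 2 < n → tri e' j = tri e j := by
          intro j hj
          unfold tri
          rw [he'lt j (by omega), he'lt (j+1) (by omega), he'lt (j+2) (by omega)]
        have hfan' : FanOrd M (n+1) e' := by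
          refine ⟨by omega, ?_, ?_, ?_, ?_⟩
          · intro u hu v hv huv
            simp only [mem_Iio] at hu hv
            simp only [he'def] at huv
            split_ifs at huv with h1 h2 h2
            · omega
            · exact absurd (huv.symm ▸ heF v (by omega)) hxF
            · exact absurd (huv ▸ heF u (by omega)) hxF
            · exact hinj (by simp only [mem_Iio]; omega) (by simp only [mem_Iio]; omega) huv
          · intro j hj
            by_cases hjn : j = n
            · rw [hjn, he'n]
              exact hxE
            · rw [he'lt j (by omega)]
              exact heE j (by omega)
          · right
            rw [htrieq 0 (by omega)]
            have h0' : tri e 0 = {e 0, e 1, e 2} := rfl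
            rw [h0']
            exact htriad0
          · intro j hj
            have htj : tri e' j = tri e j := htrieq j (by omega)
            by_cases hjn : j + 3 = n
            · have htj1 : tri e' (j+1) = {e (n-2), e (n-1), x} := by
                unfold tri
                rw [show j + 1 + 1 = j + 2 from rfl, show j + 1 + 2 = j + 3 from rfl,
                  he'lt (j+1) (by omega), he'lt (j+2) (by omega), hjn, he'n,
                  show j + 1 = n - 2 from by omega, show j + 2 = n - 1 from by omega]
              constructor
              · intro _
                rw [htj1]
                exact htriadT
              · intro htd
                rw [htj] at htd
                have htri := htris j (by omega) (by omega)
                exact (not_triangle_triad hM htri.1 htd.1 htri.2 hE5).elim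
            · have htj1 : tri e' (j+1) = tri e (j+1) := htrieq (j+1) (by omega)
              rw [htj, htj1]
              exact hfan.2.2.2.2 j (by omega)
        have hFsub : F ⊆ e' '' Set.Iio (n+1) := by
          intro z hz
          rw [hF] at hz
          obtain ⟨k, hk, rfl⟩ := hz
          simp only [mem_Iio] at hk
          exact ⟨k, by simp only [mem_Iio]; omega, he'lt k hk⟩
        exact fan_extend_contra hmax hfan' hFsub
          ⟨n, by simp only [mem_Iio]; omega, he'n⟩ hxF
end DetPairs
end

section
/- Let M be a 3-connected matroid such that |E(M)| ≥ 13, let F = (e_1, e_2, e_3, e_4, e_5) be a maximal fan of M with {e_1, e_2, e_3} a triangle, and suppose M has no detachable pair. Then there exists z ∈ E(M) − F such that {e_1, e_3, e_5, z} is a cocircuit of M. -/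
open Matroid Set
set_option linter.unusedSectionVars false
set_option linter.unusedVariables false
set_option maxHeartbeats 4000000

namespace DetPairs

variable {α : Type*}

section RankBasics

/-- ℕ-valued rank. -/
noncomputable def rn (M : Matroid α) (X : Set α) : ℕ :=
  sSup (Set.ncard '' {I | M.Indep I ∧ I ⊆ X})

variable {M : Matroid α} {X Y Z I J C D B : Set α} {x y : α}

lemma r_eq_rn (M : Matroid α) (X : Set α) : r M X = (rn M X : ℤ) := rfl

lemma lam_eq_rn (M : Matroid α) (X : Set α) :
    lam M X = (rn M X : ℤ) + (rn M (M.E \ X) : ℤ) - (rn M M.E : ℤ) := rfl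

lemma rnSet_nonempty (M : Matroid α) (X : Set α) :
    (Set.ncard '' {I | M.Indep I ∧ I ⊆ X}).Nonempty :=
  ⟨0, ∅, ⟨M.empty_indep, empty_subset X⟩, Set.ncard_empty α⟩

lemma rnSet_bdd (M : Matroid α) [M.Finite] (X : Set α) :
    BddAbove (Set.ncard '' {I | M.Indep I ∧ I ⊆ X}) := by
  refine ⟨M.E.ncard, ?_⟩
  rintro n ⟨I, ⟨hI, -⟩, rfl⟩
  exact ncard_le_ncard hI.subset_ground M.ground_finite

variable [M.Finite]

lemma le_rn (hI : M.Indep I) (hIX : I ⊆ X) : I.ncard ≤ rn M X :=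
  le_csSup (rnSet_bdd M X) ⟨I, ⟨hI, hIX⟩, rfl⟩

lemma rn_le {n : ℕ} (hn : ∀ I, M.Indep I → I ⊆ X → I.ncard ≤ n) : rn M X ≤ n :=
  csSup_le (rnSet_nonempty M X) (by rintro m ⟨I, ⟨hI, hIX⟩, rfl⟩; exact hn I hI hIX)

lemma rn_le_ncard (hX : X.Finite) : rn M X ≤ X.ncard :=
  rn_le fun _ _ hIX => ncard_le_ncard hIX hX

lemma rn_mono (h : X ⊆ Y) : rn M X ≤ rn M Y :=
  rn_le fun _ hI hIX => le_rn hI (hIX.trans h)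

lemma exists_rn_basis (hX : X ⊆ M.E) :
    ∃ I, M.Indep I ∧ I ⊆ X ∧ I.ncard = rn M X ∧ X ⊆ M.closure I := by
  obtain ⟨I, ⟨hI, hIX⟩, hcard0⟩ := Nat.sSup_mem (rnSet_nonempty M X) (rnSet_bdd M X)
  have hcard : I.ncard = rn M X := hcard0
  refine ⟨I, hI, hIX, hcard, fun y hy => ?_⟩
  by_contra hycl
  have hyI : y ∉ I := fun h => hycl (M.subset_closure I hI.subset_ground h)
  have hins : M.Indep (insert y I) := by
    rw [hI.insert_indep_iff_of_notMem hyI]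
    exact ⟨hX hy, hycl⟩
  have hle : (insert y I).ncard ≤ rn M X := le_rn hins (insert_subset hy hIX)
  rw [ncard_insert_of_notMem hyI (M.set_finite I hI.subset_ground)] at hle
  omega

lemma indep_ncard_le_of_subset_closure (hJ : M.Indep J) (hI : M.Indep I)
    (hJI : J ⊆ M.closure I) : J.ncard ≤ I.ncard := by
  obtain ⟨J', hJ', hJJ'⟩ := hJ.subset_isBasis_of_subset hJI (M.closure_subset_ground I)
  have h1 : (M ↾ (M.closure I)).IsBase J' := hJ'.restrict_isBase
  have h2 : (M ↾ (M.closure I)).IsBase I := hI.isBasis_closure.restrict_isBase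
  have hcard := h1.encard_eq_encard_of_isBase h2
  have hJ'fin : J'.Finite := M.set_finite J' hJ'.indep.subset_ground
  have heq : J'.ncard = I.ncard := by rw [Set.ncard_def, hcard, ← Set.ncard_def]
  calc J.ncard ≤ J'.ncard := ncard_le_ncard hJJ' hJ'fin
  _ = I.ncard := heq

lemma rn_le_of_subset_closure (hX : X ⊆ M.E) (hY : Y ⊆ M.E) (h : X ⊆ M.closure Y) :
    rn M X ≤ rn M Y := by
  obtain ⟨I, hI, hIY, hcard, hsp⟩ := exists_rn_basis hY
  have hclY : M.closure Y ⊆ M.closure I := by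
    rw [← M.closure_closure I]; exact M.closure_subset_closure hsp
  refine rn_le fun J hJ hJX => ?_
  calc J.ncard ≤ I.ncard :=
        indep_ncard_le_of_subset_closure hJ hI (fun z hz => hclY (h (hJX hz)))
  _ = rn M Y := hcard

lemma rn_insert_le : rn M (insert x X) ≤ rn M X + 1 := by
  refine rn_le fun I hI hIX => ?_
  have hIfin : I.Finite := M.set_finite I hI.subset_ground
  have h1 : I \ {x} ⊆ X := by
    intro z hz
    rcases hIX hz.1 with h | h
    · exact absurd h hz.2
    · exact h
  have h2 := le_rn (hI.subset diff_subset) h1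
  have h3 : I.ncard ≤ (I \ {x}).ncard + 1 := by
    by_cases hx : x ∈ I
    · exact le_of_eq (ncard_diff_singleton_add_one hx hIfin).symm
    · rw [diff_singleton_eq_self hx]; omega
  omega

lemma rn_union_le : rn M (X ∪ Y) ≤ rn M X + rn M Y := by
  refine rn_le fun I hI hIXY => ?_
  have h1 := le_rn (hI.subset inter_subset_left) (inter_subset_right (s := I) (t := X))
  have h2 : I \ X ⊆ Y := fun z hz => (hIXY hz.1).resolve_left hz.2
  have h3 := le_rn (hI.subset diff_subset) h2
  calc I.ncard = ((I ∩ X) ∪ (I \ X)).ncard := by rw [inter_union_diff]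
  _ ≤ (I ∩ X).ncard + (I \ X).ncard := ncard_union_le _ _
  _ ≤ rn M X + rn M Y := by omega

lemma mem_closure_of_rn_insert_le (hX : X ⊆ M.E) (hx : x ∈ M.E)
    (h : rn M (insert x X) ≤ rn M X) : x ∈ M.closure X := by
  obtain ⟨I, hI, hIX, hcard, hsp⟩ := exists_rn_basis hX
  by_contra hcl
  have hclI : x ∉ M.closure I := fun hxI => hcl (M.closure_subset_closure hIX hxI)
  have hxI : x ∉ I := fun hmem => hclI (M.subset_closure I hI.subset_ground hmem)
  have hins : M.Indep (insert x I) := by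
    rw [hI.insert_indep_iff_of_notMem hxI]; exact ⟨hx, hclI⟩
  have hle := le_rn hins (insert_subset_insert hIX)
  rw [ncard_insert_of_notMem hxI (M.set_finite I hI.subset_ground)] at hle
  omega

lemma rn_insert_of_mem_closure (h : x ∈ M.closure X) (hX : X ⊆ M.E) :
    rn M (insert x X) = rn M X := by
  refine le_antisymm ?_ (rn_mono (subset_insert x X))
  exact rn_le_of_subset_closure (insert_subset (M.closure_subset_ground X h) hX) hX
    (insert_subset h (M.subset_closure X hX))

lemma rn_insert_of_not_mem_closure (hX : X ⊆ M.E) (hx : x ∈ M.E) (h : x ∉ M.closure X) :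
    rn M (insert x X) = rn M X + 1 := by
  have h1 := rn_insert_le (M := M) (x := x) (X := X)
  have h2 : ¬ rn M (insert x X) ≤ rn M X := fun hle => h (mem_closure_of_rn_insert_le hX hx hle)
  omega

lemma rn_eq_ncard_of_indep (hI : M.Indep I) : rn M I = I.ncard :=
  le_antisymm (rn_le_ncard (M.set_finite I hI.subset_ground)) (le_rn hI Subset.rfl)

lemma indep_of_rn_eq_ncard (hX : X ⊆ M.E) (h : rn M X = X.ncard) : M.Indep X := by
  obtain ⟨I, hI, hIX, hcard, -⟩ := exists_rn_basis hX
  have : I = X :=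
    eq_of_subset_of_ncard_le hIX (by omega) (M.ground_finite.subset hX)
  exact this ▸ hI

lemma dep_rn_lt (hX : X ⊆ M.E) (h : ¬ M.Indep X) : rn M X + 1 ≤ X.ncard := by
  have h1 := rn_le_ncard (M := M) (M.ground_finite.subset hX)
  have h2 : rn M X ≠ X.ncard := fun he => h (indep_of_rn_eq_ncard hX he)
  omega

lemma base_ncard (hB : M.IsBase B) : B.ncard = rn M M.E := by
  refine le_antisymm (le_rn hB.indep hB.subset_ground) ?_
  exact rn_le fun J hJ hJE =>
    indep_ncard_le_of_subset_closure hJ hB.indep (by rw [hB.closure_eq]; exact hJE)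

lemma rn_closure (hX : X ⊆ M.E) : rn M (M.closure X) = rn M X :=
  le_antisymm (rn_le_of_subset_closure (M.closure_subset_ground X) hX Subset.rfl)
    (rn_mono (M.subset_closure X hX))

end RankBasics

section Cocircuits

variable {M : Matroid α} {X Y Z I J C D B : Set α} {x y d : α}

variable [M.Finite]

lemma dual_indep_iff_rn : M✶.Indep X ↔ X ⊆ M.E ∧ rn M (M.E \ X) = rn M M.E := by
  constructor
  · intro h
    obtain ⟨hXE, B, hB, hdisj⟩ := dual_indep_iff_exists'.1 h
    refine ⟨hXE, le_antisymm (rn_mono diff_subset) ?_⟩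
    have hBsub : B ⊆ M.E \ X := subset_diff.2 ⟨hB.subset_ground, hdisj.symm⟩
    calc rn M M.E = B.ncard := (base_ncard hB).symm
    _ ≤ rn M (M.E \ X) := le_rn hB.indep hBsub
  · rintro ⟨hXE, hr⟩
    obtain ⟨I, hI, hIX, hcard, hsp⟩ := exists_rn_basis (diff_subset : M.E \ X ⊆ M.E)
    obtain ⟨B, hB, hIB⟩ := hI.exists_isBase_superset
    have hBI : B = I := by
      refine (eq_of_subset_of_ncard_le hIB ?_ (M.set_finite B hB.subset_ground)).symm
      rw [hcard, hr, ← base_ncard hB]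
    rw [dual_indep_iff_exists']
    exact ⟨hXE, B, hB, by rw [hBI]; exact (subset_diff.1 hIX).2.symm⟩

lemma cocircuit_iff_rn : Cocircuit M D ↔ D ⊆ M.E ∧ rn M (M.E \ D) < rn M M.E ∧
    ∀ X, X ⊂ D → rn M (M.E \ X) = rn M M.E := by
  unfold Cocircuit Circuit
  constructor
  · rintro ⟨h1, h2, h3⟩
    have hD : D ⊆ M.E := h1
    refine ⟨hD, ?_, fun X hX => (dual_indep_iff_rn.1 (h3 X hX)).2⟩
    have hne : rn M (M.E \ D) ≠ rn M M.E := fun he => h2 (dual_indep_iff_rn.2 ⟨hD, he⟩)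
    exact lt_of_le_of_ne (rn_mono diff_subset) hne
  · rintro ⟨h1, h2, h3⟩
    refine ⟨h1, fun hind => ?_, fun X hX => dual_indep_iff_rn.2
      ⟨(hX.subset).trans h1, h3 X hX⟩⟩
    rw [dual_indep_iff_rn] at hind
    omega

lemma compl_cocircuit_closed (hD : Cocircuit M D) : M.closure (M.E \ D) = M.E \ D := by
  obtain ⟨hDE, hlt, hmin⟩ := cocircuit_iff_rn.1 hD
  refine subset_antisymm (fun x hx => ⟨M.closure_subset_ground _ hx, fun hxD => ?_⟩)
    (M.subset_closure _ diff_subset)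
  have h1 : insert x (M.E \ D) = M.E \ (D \ {x}) := by
    ext z
    simp only [mem_insert_iff, mem_diff, mem_singleton_iff]
    constructor
    · rintro (rfl | ⟨hz1, hz2⟩)
      · exact ⟨hDE hxD, fun h => h.2 rfl⟩
      · exact ⟨hz1, fun h => hz2 h.1⟩
    · rintro ⟨hz1, hz2⟩
      by_cases hzx : z = x
      · exact Or.inl hzx
      · exact Or.inr ⟨hz1, fun hzD => hz2 ⟨hzD, hzx⟩⟩
  have hss : D \ {x} ⊂ D :=
    (ssubset_iff_of_subset diff_subset).2 ⟨x, hxD, fun h => h.2 rfl⟩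
  have h2 := hmin _ hss
  have h3 : rn M (insert x (M.E \ D)) = rn M (M.E \ D) :=
    rn_insert_of_mem_closure hx diff_subset
  rw [h1, h2] at h3
  omega

lemma compl_cocircuit_rn (hD : Cocircuit M D) : rn M (M.E \ D) + 1 = rn M M.E := by
  obtain ⟨hDE, hlt, hmin⟩ := cocircuit_iff_rn.1 hD
  have hne : D.Nonempty := by
    rcases eq_empty_or_nonempty D with rfl | h
    · rw [diff_empty] at hlt; omega
    · exact h
  obtain ⟨y, hy⟩ := hne
  have h1 : insert y (M.E \ D) = M.E \ (D \ {y}) := by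
    ext z
    simp only [mem_insert_iff, mem_diff, mem_singleton_iff]
    constructor
    · rintro (rfl | ⟨hz1, hz2⟩)
      · exact ⟨hDE hy, fun h => h.2 rfl⟩
      · exact ⟨hz1, fun h => hz2 h.1⟩
    · rintro ⟨hz1, hz2⟩
      by_cases hzy : z = y
      · exact Or.inl hzy
      · exact Or.inr ⟨hz1, fun hzD => hz2 ⟨hzD, hzy⟩⟩
  have hss : D \ {y} ⊂ D :=
    (ssubset_iff_of_subset diff_subset).2 ⟨y, hy, fun h => h.2 rfl⟩
  have h2 := hmin _ hss
  have h3 := rn_insert_le (M := M) (x := y) (X := M.E \ D)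
  rw [h1, h2] at h3
  omega

lemma hyperplane_cocircuit (hZ : Z ⊆ M.E) (hflat : M.closure Z = Z)
    (hr : rn M Z + 1 = rn M M.E) : Cocircuit M (M.E \ Z) := by
  rw [cocircuit_iff_rn]
  refine ⟨diff_subset, by rw [diff_diff_cancel_left hZ]; omega, fun X hX => ?_⟩
  obtain ⟨yne, hyX⟩ := exists_of_ssubset hX
  have h1 : insert yne Z ⊆ M.E \ X := by
    refine insert_subset ⟨hyX.1.1, hyX.2⟩ fun z hz => ⟨hZ hz, fun hzX => ?_⟩
    exact (hX.subset hzX).2 hz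
  have h2 : yne ∉ M.closure Z := by rw [hflat]; exact hyX.1.2
  have h3 : rn M (insert yne Z) = rn M Z + 1 :=
    rn_insert_of_not_mem_closure hZ hyX.1.1 h2
  have h4 := rn_mono (M := M) h1
  have h5 := rn_mono (M := M) (diff_subset : M.E \ X ⊆ M.E)
  omega

lemma exists_cocircuit_subset (hX : X ⊆ M.E) (h : rn M (M.E \ X) < rn M M.E) :
    ∃ D, Cocircuit M D ∧ D ⊆ X := by
  obtain ⟨I, hI, hIss, hcard, hsp⟩ := exists_rn_basis (diff_subset : M.E \ X ⊆ M.E)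
  obtain ⟨B, hB, hIB⟩ := hI.exists_isBase_superset
  have hBcard : B.ncard = rn M M.E := base_ncard hB
  obtain ⟨B', hIB', hB'B, hB'card⟩ :=
    Set.exists_subsuperset_card_eq hIB (n := rn M M.E - 1) (by omega) (by omega)
  have hB'i : M.Indep B' := hB.indep.subset hB'B
  have hZE : M.closure B' ⊆ M.E := M.closure_subset_ground _
  have hrZ : rn M (M.closure B') = rn M M.E - 1 := by
    rw [rn_closure hB'i.subset_ground, rn_eq_ncard_of_indep hB'i, hB'card]
  refine ⟨M.E \ M.closure B', hyperplane_cocircuit hZE (M.closure_closure _) (by omega), ?_⟩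
  intro t ht
  by_contra htX
  have h1 : t ∈ M.E \ X := ⟨ht.1, htX⟩
  have h2 : t ∈ M.closure B' := M.closure_subset_closure hIB' (hsp h1)
  exact ht.2 h2

lemma circuit_mem_closure (hC : Circuit M C) (hx : x ∈ C) : x ∈ M.closure (C \ {x}) := by
  have hCd : C \ {x} ⊂ C :=
    (ssubset_iff_of_subset diff_subset).2 ⟨x, hx, fun h => h.2 rfl⟩
  have hI : M.Indep (C \ {x}) := hC.2.2 _ hCd
  have hxE : x ∈ M.E := hC.1 hx
  rw [hI.mem_closure_iff']
  refine ⟨hxE, fun hind => ?_⟩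
  exfalso
  apply hC.2.1
  have heq : insert x (C \ {x}) = C := by
    rw [insert_diff_singleton, insert_eq_of_mem hx]
  rwa [heq] at hind

lemma orthogonal (hC : Circuit M C) (hD : Cocircuit M D) (hx : x ∈ C) (hxD : x ∈ D)
    (hsub : C ∩ D ⊆ {x}) : False := by
  have h1 : C \ {x} ⊆ M.E \ D :=
    fun z hz => ⟨hC.1 hz.1, fun hzD => hz.2 (hsub ⟨hz.1, hzD⟩)⟩
  have h2 := circuit_mem_closure hC hx
  have h3 : x ∈ M.E \ D := by
    rw [← compl_cocircuit_closed hD]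
    exact M.closure_subset_closure h1 h2
  exact h3.2 hxD

lemma exists_circuit_subset (hX : X ⊆ M.E) (hdep : ¬ M.Indep X) :
    ∃ C, Circuit M C ∧ C ⊆ X := by
  have hfin : X.Finite := M.ground_finite.subset hX
  have hne : ∃ n, n ∈ {n | ∃ C, C ⊆ X ∧ ¬ M.Indep C ∧ C.ncard = n} :=
    ⟨X.ncard, X, Subset.rfl, hdep, rfl⟩
  obtain ⟨C, hCX, hCdep, hCcard⟩ := Nat.sInf_mem hne
  refine ⟨C, ⟨hCX.trans hX, hCdep, fun D hD => ?_⟩, hCX⟩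
  by_contra hDdep
  have hmem : D.ncard ∈ {n | ∃ C, C ⊆ X ∧ ¬ M.Indep C ∧ C.ncard = n} :=
    ⟨D, hD.subset.trans hCX, hDdep, rfl⟩
  have hlt : D.ncard < C.ncard := ncard_lt_ncard hD (hfin.subset hCX)
  have := Nat.sInf_le hmem
  omega

end Cocircuits

section Lam

variable {M : Matroid α} {X Y Z C D : Set α} {x d : α}

variable [M.Finite]

lemma lam_nonneg (hX : X ⊆ M.E) : 0 ≤ lam M X := by
  have h := rn_union_le (M := M) (X := X) (Y := M.E \ X)
  rw [union_diff_cancel hX] at h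
  rw [lam_eq_rn]; push_cast; omega

lemma lam_compl (hX : X ⊆ M.E) : lam M (M.E \ X) = lam M X := by
  rw [lam_eq_rn, lam_eq_rn, diff_diff_cancel_left hX]; ring

lemma threeConn_two_le_lam (h3 : ThreeConnected M) (hX : X ⊆ M.E)
    (h2 : 2 ≤ X.ncard) (h2' : 2 ≤ (M.E \ X).ncard) : 2 ≤ lam M X := by
  by_contra h
  have h0 := lam_nonneg (M := M) hX
  have : lam M X = 0 ∨ lam M X = 1 := by omega
  rcases this with h | h
  · exact h3 1 one_pos (by norm_num) X hX
      ⟨by rw [h]; norm_num, by push_cast; omega, by push_cast; omega⟩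
  · exact h3 2 (by norm_num) (by norm_num) X hX
      ⟨by rw [h]; norm_num, by push_cast; omega, by push_cast; omega⟩

lemma threeConn_lam_ne_zero (h3 : ThreeConnected M) (hX : X ⊆ M.E)
    (h1 : X.Nonempty) (h1' : (M.E \ X).Nonempty) (h0 : lam M X = 0) : False := by
  have c1 : 1 ≤ X.ncard := (ncard_pos (M.ground_finite.subset hX)).2 h1
  have c2 : 1 ≤ (M.E \ X).ncard := (ncard_pos (M.ground_finite.subset diff_subset)).2 h1'
  exact h3 1 one_pos (by norm_num) X hX
    ⟨by rw [h0]; norm_num, by push_cast; omega, by push_cast; omega⟩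

lemma circuit_ncard_ge (h3 : ThreeConnected M) (hE : 13 ≤ M.E.ncard) (hC : Circuit M C) :
    3 ≤ C.ncard := by
  have hCE := hC.1
  have hfinE := M.ground_finite
  have hfin : C.Finite := hfinE.subset hCE
  have hCne : C.Nonempty := by
    rcases eq_empty_or_nonempty C with rfl | h
    · exact absurd M.empty_indep hC.2.1
    · exact h
  have h1 : 1 ≤ C.ncard := (ncard_pos hfin).2 hCne
  by_contra hlt
  push_neg at hlt
  have hdiff : (M.E \ C).ncard = M.E.ncard - C.ncard := ncard_diff hCE hfin
  have hrC : rn M C + 1 ≤ C.ncard := dep_rn_lt hCE hC.2.1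
  have hrE : rn M (M.E \ C) ≤ rn M M.E := rn_mono diff_subset
  have hlam : lam M C ≤ (C.ncard : ℤ) - 1 := by rw [lam_eq_rn]; push_cast; omega
  have h0 := lam_nonneg (M := M) hCE
  rcases Nat.lt_or_ge C.ncard 2 with hc | hc
  · have hone : C.ncard = 1 := by omega
    have hne' : (M.E \ C).Nonempty := nonempty_of_ncard_ne_zero (by omega)
    refine threeConn_lam_ne_zero h3 hCE hCne hne' ?_
    rw [hone] at hlam; push_cast at hlam; omega
  · have := threeConn_two_le_lam h3 hCE (by omega) (by omega)
    have : (C.ncard : ℤ) = 2 := by push_cast; omega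
    omega

lemma cocircuit_ncard_ge (h3 : ThreeConnected M) (hE : 13 ≤ M.E.ncard)
    (hD : Cocircuit M D) : 3 ≤ D.ncard := by
  have hDE : D ⊆ M.E := hD.1
  have hfinE := M.ground_finite
  have hfin : D.Finite := hfinE.subset hDE
  have hDne : D.Nonempty := by
    rcases eq_empty_or_nonempty D with rfl | h
    · exact absurd M✶.empty_indep hD.2.1
    · exact h
  have h1 : 1 ≤ D.ncard := (ncard_pos hfin).2 hDne
  by_contra hlt
  push_neg at hlt
  have hdiff : (M.E \ D).ncard = M.E.ncard - D.ncard := ncard_diff hDE hfin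
  have hrD : rn M D ≤ D.ncard := rn_le_ncard hfin
  have hrE := compl_cocircuit_rn hD
  have hlam : lam M D ≤ (D.ncard : ℤ) - 1 := by rw [lam_eq_rn]; push_cast; omega
  have h0 := lam_nonneg (M := M) hDE
  rcases Nat.lt_or_ge D.ncard 2 with hc | hc
  · have hone : D.ncard = 1 := by omega
    have hne' : (M.E \ D).Nonempty := nonempty_of_ncard_ne_zero (by omega)
    refine threeConn_lam_ne_zero h3 hDE hDne hne' ?_
    rw [hone] at hlam; push_cast at hlam; omega
  · have := threeConn_two_le_lam h3 hDE (by omega) (by omega)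
    have : (D.ncard : ℤ) = 2 := by push_cast; omega
    omega

lemma two_circuits_rn {C C' : Set α} (hC1 : Circuit M C) (hC2 : Circuit M C') (hne : C ≠ C')
    (h1 : C ⊆ X) (h2 : C' ⊆ X) (hX : X ⊆ M.E) : rn M X + 2 ≤ X.ncard := by
  have hx : ∃ x, x ∈ C ∧ x ∉ C' := by
    by_contra h
    push_neg at h
    have hss : C ⊂ C' := ssubset_iff_subset_ne.2 ⟨h, hne⟩
    exact hC1.2.1 (hC2.2.2 C hss)
  obtain ⟨x, hxC, hxC'⟩ := hx
  have hxX : x ∈ X := h1 hxC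
  have hfin : X.Finite := M.ground_finite.subset hX
  have hcl : x ∈ M.closure (X \ {x}) :=
    M.closure_subset_closure (diff_subset_diff_left h1) (circuit_mem_closure hC1 hxC)
  have e1 : rn M X = rn M (X \ {x}) := by
    conv_lhs => rw [← insert_eq_of_mem hxX, ← insert_diff_singleton]
    exact rn_insert_of_mem_closure hcl (diff_subset.trans hX)
  have h2' : C' ⊆ X \ {x} := subset_diff_singleton h2 hxC'
  have hdep : ¬ M.Indep (X \ {x}) := fun h => hC2.2.1 (h.subset h2')
  have hlt := dep_rn_lt (diff_subset.trans hX) hdep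
  have hcard : (X \ {x}).ncard + 1 = X.ncard := ncard_diff_singleton_add_one hxX hfin
  omega

lemma triangle_triad_contra (h3 : ThreeConnected M) (hE : 13 ≤ M.E.ncard)
    (S : Set α) (htr : Triangle M S) (htd : Triad M S) : False := by
  have hSE : S ⊆ M.E := htr.1.1
  have h1 : rn M S + 1 ≤ S.ncard := dep_rn_lt hSE htr.1.2.1
  have h2 : rn M (M.E \ S) + 1 = rn M M.E := compl_cocircuit_rn htd.1
  have hcard3 := htr.2
  have hlam : lam M S ≤ 1 := by rw [lam_eq_rn]; push_cast; omega
  have hd : (M.E \ S).ncard = M.E.ncard - S.ncard :=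
    ncard_diff hSE (M.ground_finite.subset hSE)
  have := threeConn_two_le_lam h3 hSE (by omega) (by omega)
  omega

end Lam

section Restrict

variable {M : Matroid α} {X Y Z R D : Set α} {x d : α}

lemma rn_restrict (M : Matroid α) (R : Set α) (hY : Y ⊆ R) : rn (M ↾ R) Y = rn M Y := by
  have hset : {I | (M ↾ R).Indep I ∧ I ⊆ Y} = {I | M.Indep I ∧ I ⊆ Y} := by
    ext I
    simp only [mem_setOf_eq, Matroid.restrict_indep_iff]
    exact ⟨fun h => ⟨h.1.1, h.2⟩, fun h => ⟨⟨h.1, h.2.trans hY⟩, h.2⟩⟩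
  unfold rn
  rw [hset]

lemma restrict_finite [M.Finite] (hR : R ⊆ M.E) : (M ↾ R).Finite :=
  ⟨M.ground_finite.subset hR⟩

lemma mem_closure_restrict (hR : R ⊆ M.E) (hX : X ⊆ R) (hd : d ∈ R)
    (h : d ∈ M.closure X) : d ∈ (M ↾ R).closure X := by
  obtain ⟨I, hI⟩ := M.exists_isBasis X (hX.trans hR)
  have hIR : (M ↾ R).IsBasis I X := (isBasis_restrict_iff hR).2 ⟨hI, hX⟩
  have h2 : d ∈ M.closure I := by rw [hI.closure_eq_closure]; exact h
  rcases hI.indep.mem_closure_iff.1 h2 with hdep | hdI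
  · have hdep' : (M ↾ R).Dep (insert d I) := by
      rw [restrict_dep_iff]
      exact ⟨hdep.not_indep, insert_subset hd ((hI.subset).trans hX)⟩
    have hmem := (hIR.indep.mem_closure_iff).2 (Or.inl hdep')
    exact (M ↾ R).closure_subset_closure hIR.subset hmem
  · exact (M ↾ R).subset_closure X (by rw [Matroid.restrict_ground_eq]; exact hX)
      (hI.subset hdI)

lemma lam_del [M.Finite] (hd : d ∈ M.E) (hX : X ⊆ M.E \ {d}) (hcl : d ∈ M.closure X) :
    lam (M ↾ (M.E \ {d})) X = lam M (insert d X) := by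
  have hXE : X ⊆ M.E := hX.trans diff_subset
  have e1 : rn (M ↾ (M.E \ {d})) X = rn M X := rn_restrict _ _ hX
  have e2 : rn (M ↾ (M.E \ {d})) ((M.E \ {d}) \ X) = rn M ((M.E \ {d}) \ X) :=
    rn_restrict _ _ diff_subset
  have e3 : rn (M ↾ (M.E \ {d})) (M.E \ {d}) = rn M (M.E \ {d}) :=
    rn_restrict _ _ Subset.rfl
  have e4 : rn M (insert d X) = rn M X := rn_insert_of_mem_closure hcl hXE
  have e5 : rn M M.E = rn M (M.E \ {d}) := by
    have hcl' : d ∈ M.closure (M.E \ {d}) :=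
      M.closure_subset_closure hX hcl
    calc rn M M.E = rn M (insert d (M.E \ {d})) := by
          rw [insert_diff_singleton, insert_eq_of_mem hd]
    _ = rn M (M.E \ {d}) := rn_insert_of_mem_closure hcl' diff_subset
  have e6 : M.E \ insert d X = (M.E \ {d}) \ X := by
    rw [diff_diff, Set.singleton_union]
  rw [lam_eq_rn, lam_eq_rn, Matroid.restrict_ground_eq, e1, e2, e3, e4, e6, e5]

lemma lam_insert_le {N : Matroid α} [N.Finite] {D Y : Set α} {d : α}
    (hD : Cocircuit N D) (hdD : d ∈ D) (hDY : D ⊆ insert d Y) (hY : Y ⊆ N.E)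
    (hd : d ∈ N.E) (hdY : d ∉ Y) : lam N (insert d Y) ≤ lam N Y := by
  have h1 : rn N (insert d Y) ≤ rn N Y + 1 := rn_insert_le
  have hins : insert d ((N.E \ Y) \ {d}) = N.E \ Y := by
    rw [insert_diff_singleton, insert_eq_of_mem (show d ∈ N.E \ Y from ⟨hd, hdY⟩)]
  have hnc : d ∉ N.closure ((N.E \ Y) \ {d}) := by
    intro hmem
    have hsub : (N.E \ Y) \ {d} ⊆ N.E \ D := by
      intro z hz
      refine ⟨hz.1.1, fun hzD => ?_⟩
      rcases hDY hzD with rfl | hzY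
      · exact hz.2 rfl
      · exact hz.1.2 hzY
    have : d ∈ N.E \ D := by
      rw [← compl_cocircuit_closed hD]
      exact N.closure_subset_closure hsub hmem
    exact this.2 hdD
  have h2 : rn N ((N.E \ Y) \ {d}) + 1 = rn N (N.E \ Y) := by
    conv_rhs => rw [← hins]
    exact (rn_insert_of_not_mem_closure (diff_subset.trans diff_subset) hd hnc).symm
  have e6 : N.E \ insert d Y = (N.E \ Y) \ {d} := by
    rw [diff_diff, Set.union_singleton]
  rw [lam_eq_rn, lam_eq_rn, e6]
  push_cast
  omega

end Restrict

section Fan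

variable {M : Matroid α} {e : ℕ → α} {F : Set α} {u : α}

lemma fan_extend_append
    (hord : FanOrd M 5 e) (hF : F = e '' Set.Iio 5) (hmax : MaximalFan M F)
    (hboth : ∀ S, Triangle M S → Triad M S → False)
    (hT1 : Triangle M (tri e 0)) (hTd : Triad M (tri e 1)) (hT2 : Triangle M (tri e 2))
    (hu : u ∈ M.E) (huF : u ∉ F) (htriad : Triad M {e 3, e 4, u}) : False := by
  classical
  set e' : ℕ → α := fun i => if i < 5 then e i else u with he'def
  have he'lt : ∀ i, i < 5 → e' i = e i := fun i hi => if_pos hi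
  have he'5 : e' 5 = u := if_neg (by omega)
  have hmemF : ∀ i, i < 5 → e i ∈ F := fun i hi => hF ▸ ⟨i, Set.mem_Iio.2 hi, rfl⟩
  have t0 : tri e' 0 = tri e 0 := by
    unfold tri
    rw [he'lt 0 (by omega), he'lt 1 (by omega), he'lt 2 (by omega)]
  have t1 : tri e' 1 = tri e 1 := by
    unfold tri
    rw [he'lt 1 (by omega), he'lt 2 (by omega), he'lt 3 (by omega)]
  have t2 : tri e' 2 = tri e 2 := by
    unfold tri
    rw [he'lt 2 (by omega), he'lt 3 (by omega), he'lt 4 (by omega)]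
  have t3 : tri e' 3 = {e 3, e 4, u} := by
    unfold tri
    rw [he'lt 3 (by omega), he'lt 4 (by omega), he'5]
  have hord6 : FanOrd M 6 e' := by
    refine ⟨by omega, ?_, ?_, Or.inl (t0 ▸ hT1), ?_⟩
    · intro i hi j hj hij
      simp only [Set.mem_Iio] at hi hj
      by_cases hi5 : i < 5 <;> by_cases hj5 : j < 5
      · rw [he'lt i hi5, he'lt j hj5] at hij
        exact hord.2.1 (Set.mem_Iio.2 hi5) (Set.mem_Iio.2 hj5) hij
      · exfalso
        have hj' : j = 5 := by omega
        rw [he'lt i hi5, hj', he'5] at hij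
        exact huF (hij ▸ hmemF i hi5)
      · exfalso
        have hi' : i = 5 := by omega
        rw [he'lt j hj5, hi', he'5] at hij
        exact huF (hij.symm ▸ hmemF j hj5)
      · omega
    · intro i hi
      by_cases hi5 : i < 5
      · rw [he'lt i hi5]; exact hord.2.2.1 i hi5
      · have : i = 5 := by omega
        rw [this, he'5]; exact hu
    · intro i hi
      have hi' : i ≤ 2 := by omega
      interval_cases i
      · exact ⟨fun _ => t1 ▸ hTd, fun h => absurd (t0 ▸ h) (fun h' => hboth _ hT1 h')⟩
      · exact ⟨fun h => absurd (t1 ▸ h) (fun h' => hboth _ h' hTd), fun _ => t2 ▸ hT2⟩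
      · exact ⟨fun _ => t3 ▸ htriad, fun h => absurd (t2 ▸ h) (fun h' => hboth _ hT2 h')⟩
  have hfan : IsFan M (e' '' Set.Iio 6) := Or.inr ⟨6, e', hord6, rfl⟩
  have hsub : F ⊆ e' '' Set.Iio 6 := by
    rw [hF]
    rintro x ⟨i, hi, rfl⟩
    have hi5 : i < 5 := Set.mem_Iio.1 hi
    exact ⟨i, Set.mem_Iio.2 (by omega), he'lt i hi5⟩
  have heq := hmax.2 _ hfan hsub
  apply huF
  rw [← heq]
  exact ⟨5, Set.mem_Iio.2 (by omega), he'5⟩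

lemma fan_extend_prepend
    (hord : FanOrd M 5 e) (hF : F = e '' Set.Iio 5) (hmax : MaximalFan M F)
    (hboth : ∀ S, Triangle M S → Triad M S → False)
    (hT1 : Triangle M (tri e 0)) (hTd : Triad M (tri e 1)) (hT2 : Triangle M (tri e 2))
    (hu : u ∈ M.E) (huF : u ∉ F) (htriad : Triad M {u, e 0, e 1}) : False := by
  classical
  set e' : ℕ → α := fun i => if i = 0 then u else e (i - 1) with he'def
  have he'0 : e' 0 = u := if_pos rfl
  have he's : ∀ i, e' (i + 1) = e i := fun i => by
    show (if i + 1 = 0 then u else e (i + 1 - 1)) = e i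
    rw [if_neg (by omega)]
    congr 1
  have hmemF : ∀ i, i < 5 → e i ∈ F := fun i hi => hF ▸ ⟨i, Set.mem_Iio.2 hi, rfl⟩
  have t0 : tri e' 0 = {u, e 0, e 1} := by
    unfold tri
    rw [he'0, show (0 + 1 : ℕ) = 0 + 1 from rfl, he's 0, show (0 + 2 : ℕ) = 1 + 1 from rfl,
      he's 1]
  have t1 : tri e' 1 = tri e 0 := by
    unfold tri
    rw [show (1 + 1 : ℕ) = 1 + 1 from rfl, he's 0, he's 1,
      show (1 + 2 : ℕ) = 2 + 1 from rfl, he's 2]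
  have t2 : tri e' 2 = tri e 1 := by
    unfold tri
    rw [he's 1, show (2 + 1 : ℕ) = 2 + 1 from rfl, he's 2,
      show (2 + 2 : ℕ) = 3 + 1 from rfl, he's 3]
  have t3 : tri e' 3 = tri e 2 := by
    unfold tri
    rw [he's 2, show (3 + 1 : ℕ) = 3 + 1 from rfl, he's 3,
      show (3 + 2 : ℕ) = 4 + 1 from rfl, he's 4]
  have hord6 : FanOrd M 6 e' := by
    refine ⟨by omega, ?_, ?_, Or.inr (t0 ▸ htriad), ?_⟩
    · intro i hi j hj hij
      simp only [Set.mem_Iio] at hi hj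
      rcases Nat.eq_zero_or_pos i with rfl | hi0 <;> rcases Nat.eq_zero_or_pos j with rfl | hj0
      · rfl
      · exfalso
        obtain ⟨j', rfl⟩ := Nat.exists_eq_add_of_lt hj0
        rw [he'0, Nat.zero_add, he's j'] at hij
        exact huF (hij ▸ hmemF j' (by omega))
      · exfalso
        obtain ⟨i', rfl⟩ := Nat.exists_eq_add_of_lt hi0
        rw [he'0, Nat.zero_add, he's i'] at hij
        exact huF (hij.symm ▸ hmemF i' (by omega))
      · obtain ⟨i', rfl⟩ := Nat.exists_eq_add_of_lt hi0
        obtain ⟨j', rfl⟩ := Nat.exists_eq_add_of_lt hj0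
        rw [Nat.zero_add, Nat.zero_add, he's i', he's j'] at hij
        have := hord.2.1 (Set.mem_Iio.2 (show i' < 5 by omega))
          (Set.mem_Iio.2 (show j' < 5 by omega)) hij
        omega
    · intro i hi
      rcases Nat.eq_zero_or_pos i with rfl | hi0
      · rw [he'0]; exact hu
      · obtain ⟨i', rfl⟩ := Nat.exists_eq_add_of_lt hi0
        rw [Nat.zero_add, he's i']
        exact hord.2.2.1 i' (by omega)
    · intro i hi
      have hi' : i ≤ 2 := by omega
      interval_cases i
      · exact ⟨fun h => absurd (t0 ▸ h) (fun h' => hboth _ h' htriad), fun _ => t1 ▸ hT1⟩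
      · exact ⟨fun _ => t2 ▸ hTd, fun h => absurd (t1 ▸ h) (fun h' => hboth _ hT1 h')⟩
      · exact ⟨fun h => absurd (t2 ▸ h) (fun h' => hboth _ h' hTd), fun _ => t3 ▸ hT2⟩
  have hfan : IsFan M (e' '' Set.Iio 6) := Or.inr ⟨6, e', hord6, rfl⟩
  have hsub : F ⊆ e' '' Set.Iio 6 := by
    rw [hF]
    rintro x ⟨i, hi, rfl⟩
    have hi5 : i < 5 := Set.mem_Iio.1 hi
    exact ⟨i + 1, Set.mem_Iio.2 (by omega), he's i⟩
  have heq := hmax.2 _ hfan hsub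
  apply huF
  rw [← heq]
  exact ⟨0, Set.mem_Iio.2 (by omega), he'0⟩

end Fan

/-- In a 3-connected matroid with at least 13 elements and no detachable pair,
a maximal fan `(e 0, …, e 4)` of length 5 starting with a triangle extends to a
cocircuit `{e 0, e 2, e 4, z}` with `z` outside the fan. -/
theorem stmt18 (M : Matroid α) [M.Finite] (hM : ThreeConnected M)
    (hE : 13 ≤ M.E.ncard) {e : ℕ → α} {F : Set α}
    (hord : FanOrd M 5 e) (hF : F = e '' Set.Iio 5) (hmax : MaximalFan M F)
    (htri : Triangle M {e 0, e 1, e 2})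
    (hnd : ∀ x y, ¬ DetachablePair M x y) :
    ∃ z ∈ M.E \ F, Cocircuit M {e 0, e 2, e 4, z} := by
  have hinj := hord.2.1
  have hmem := hord.2.2.1
  have halt := hord.2.2.2.2
  have htri0 : Triangle M (tri e 0) := htri
  have hTd : Triad M (tri e 1) := (halt 0 (by omega)).1 htri0
  have hT2 : Triangle M (tri e 2) := (halt 1 (by omega)).2 hTd
  have hA : Circuit M {e 0, e 1, e 2} := htri.1
  have hTc : Cocircuit M {e 1, e 2, e 3} := hTd.1
  have hB : Circuit M {e 2, e 3, e 4} := hT2.1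
  have hne : ∀ i j, i < 5 → j < 5 → i ≠ j → e i ≠ e j :=
    fun i j hi hj hij h => hij (hinj (Set.mem_Iio.2 hi) (Set.mem_Iio.2 hj) h)
  have hEfin := M.ground_finite
  have hFE : F ⊆ M.E := by
    rw [hF]; rintro x ⟨i, hi, rfl⟩; exact hmem i (Set.mem_Iio.1 hi)
  have hFmem : ∀ i, i < 5 → e i ∈ F := fun i hi => hF ▸ ⟨i, Set.mem_Iio.2 hi, rfl⟩
  have hF5 : F = {e 0, e 1, e 2, e 3, e 4} := by
    rw [hF]
    ext x
    simp only [mem_image, Set.mem_Iio, mem_insert_iff, mem_singleton_iff]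
    constructor
    · rintro ⟨i, hi, rfl⟩
      interval_cases i <;> tauto
    · rintro (rfl | rfl | rfl | rfl | rfl)
      exacts [⟨0, by omega, rfl⟩, ⟨1, by omega, rfl⟩, ⟨2, by omega, rfl⟩,
        ⟨3, by omega, rfl⟩, ⟨4, by omega, rfl⟩]
  have hFcard : F.ncard = 5 := by
    rw [hF, ncard_image_of_injOn hinj, ← Finset.coe_range, ncard_coe_finset,
      Finset.card_range]
  have hboth : ∀ S, Triangle M S → Triad M S → False :=
    fun S htr htd => triangle_triad_contra hM hE S htr htd
  have hclA : e 0 ∈ M.closure {e 1, e 2} := by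
    have h := circuit_mem_closure hA (show e 0 ∈ ({e 0, e 1, e 2} : Set α) from
      mem_insert _ _)
    have hset : ({e 0, e 1, e 2} : Set α) \ {e 0} = {e 1, e 2} := by
      ext x
      simp only [mem_diff, mem_insert_iff, mem_singleton_iff]
      constructor
      · rintro ⟨rfl | rfl | rfl, hx⟩
        · exact absurd rfl hx
        · exact Or.inl rfl
        · exact Or.inr rfl
      · rintro (rfl | rfl)
        · exact ⟨Or.inr (Or.inl rfl), hne 1 0 (by omega) (by omega) (by omega)⟩
        · exact ⟨Or.inr (Or.inr rfl), hne 2 0 (by omega) (by omega) (by omega)⟩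
    rwa [hset] at h
  have hclB : e 4 ∈ M.closure {e 2, e 3} := by
    have h := circuit_mem_closure hB (show e 4 ∈ ({e 2, e 3, e 4} : Set α) from
      Or.inr (Or.inr rfl))
    have hset : ({e 2, e 3, e 4} : Set α) \ {e 4} = {e 2, e 3} := by
      ext x
      simp only [mem_diff, mem_insert_iff, mem_singleton_iff]
      constructor
      · rintro ⟨rfl | rfl | rfl, hx⟩
        · exact Or.inl rfl
        · exact Or.inr rfl
        · exact absurd rfl hx
      · rintro (rfl | rfl)
        · exact ⟨Or.inl rfl, hne 2 4 (by omega) (by omega) (by omega)⟩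
        · exact ⟨Or.inr (Or.inl rfl), hne 3 4 (by omega) (by omega) (by omega)⟩
    rwa [hset] at h
  have hTsubF : ({e 1, e 2, e 3} : Set α) ⊆ F := by
    rw [hF5]; intro x hx
    simp only [mem_insert_iff, mem_singleton_iff] at hx ⊢
    tauto
  -- the "grand" lemma: the triad is the only cocircuit inside F
  have hgrand : ∀ D, Cocircuit M D → D ⊆ F → D ≠ {e 1, e 2, e 3} → False := by
    intro D hD hDF hDne
    have hDE : D ⊆ M.E := hDF.trans hFE
    have hAB : ({e 0, e 1, e 2} : Set α) ≠ {e 2, e 3, e 4} := by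
      intro h
      have h0 : e 0 ∈ ({e 2, e 3, e 4} : Set α) := h ▸ mem_insert _ _
      simp only [mem_insert_iff, mem_singleton_iff] at h0
      rcases h0 with h0 | h0 | h0
      · exact hne 0 2 (by omega) (by omega) (by omega) h0
      · exact hne 0 3 (by omega) (by omega) (by omega) h0
      · exact hne 0 4 (by omega) (by omega) (by omega) h0
    have hAF : ({e 0, e 1, e 2} : Set α) ⊆ F := by
      rw [hF5]; intro x hx; simp only [mem_insert_iff, mem_singleton_iff] at hx ⊢; tauto
    have hBF : ({e 2, e 3, e 4} : Set α) ⊆ F := by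
      rw [hF5]; intro x hx; simp only [mem_insert_iff, mem_singleton_iff] at hx ⊢; tauto
    have hrF : rn M F + 2 ≤ F.ncard := two_circuits_rn hA hB hAB hAF hBF hFE
    rw [hFcard] at hrF
    have hrT := compl_cocircuit_rn hTc
    have hflatT := compl_cocircuit_closed hTc
    have hflatD := compl_cocircuit_closed hD
    have hrD := compl_cocircuit_rn hD
    have hsub1 : M.E \ F ⊆ M.E \ {e 1, e 2, e 3} := diff_subset_diff_right hTsubF
    have hsub2 : M.E \ F ⊆ M.E \ D := diff_subset_diff_right hDF
    have hle1 : rn M (M.E \ F) ≤ rn M (M.E \ {e 1, e 2, e 3}) := rn_mono hsub1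
    by_cases hcrit : rn M (M.E \ F) + 2 ≤ rn M M.E
    · have hlamF : lam M F ≤ 1 := by rw [lam_eq_rn]; push_cast; omega
      have hEFc : (M.E \ F).ncard = M.E.ncard - 5 := by
        rw [ncard_diff hFE (hEfin.subset hFE), hFcard]
      have h2lam := threeConn_two_le_lam hM hFE (by omega) (by omega)
      omega
    · push_neg at hcrit
      have hZE : M.closure (M.E \ F) ⊆ M.E := M.closure_subset_ground _
      have hrZ : rn M (M.closure (M.E \ F)) = rn M (M.E \ F) := rn_closure diff_subset
      have hZT : M.closure (M.E \ F) ⊆ M.E \ {e 1, e 2, e 3} := by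
        calc M.closure (M.E \ F) ⊆ M.closure (M.E \ {e 1, e 2, e 3}) :=
              M.closure_subset_closure hsub1
        _ = M.E \ {e 1, e 2, e 3} := hflatT
      have hZD : M.closure (M.E \ F) ⊆ M.E \ D := by
        calc M.closure (M.E \ F) ⊆ M.closure (M.E \ D) := M.closure_subset_closure hsub2
        _ = M.E \ D := hflatD
      have hH : Cocircuit M (M.E \ M.closure (M.E \ F)) :=
        hyperplane_cocircuit hZE (M.closure_closure _) (by omega)
      have hTZ : ({e 1, e 2, e 3} : Set α) ⊆ M.E \ M.closure (M.E \ F) :=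
        fun x hx => ⟨hFE (hTsubF hx), fun hxZ => (hZT hxZ).2 hx⟩
      have hTeq : M.E \ M.closure (M.E \ F) = {e 1, e 2, e 3} := by
        by_contra hne2
        have hss : ({e 1, e 2, e 3} : Set α) ⊂ M.E \ M.closure (M.E \ F) :=
          ssubset_iff_subset_ne.2 ⟨hTZ, fun h => hne2 h.symm⟩
        have := (cocircuit_iff_rn.1 hH).2.2 _ hss
        omega
      have hDT : D ⊆ ({e 1, e 2, e 3} : Set α) := by
        rw [← hTeq]
        exact fun x hx => ⟨hDE hx, fun hxZ => (hZD hxZ).2 hx⟩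
      by_cases hDeq : D = {e 1, e 2, e 3}
      · exact hDne hDeq
      · have hss : D ⊂ ({e 1, e 2, e 3} : Set α) := ssubset_iff_subset_ne.2 ⟨hDT, hDeq⟩
        have := (cocircuit_iff_rn.1 hTc).2.2 D hss
        omega
  -- set up the deletion M2 = M \ e0 \ e4
  have h04 : e 0 ≠ e 4 := hne 0 4 (by omega) (by omega) (by omega)
  have he0E : e 0 ∈ M.E := hmem 0 (by omega)
  have he4E : e 4 ∈ M.E := hmem 4 (by omega)
  have hndel : ¬ ThreeConnected (M ↾ (M.E \ {e 0, e 4})) := by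
    intro h3c
    exact hnd (e 0) (e 4) ⟨h04, he0E, he4E, Or.inl h3c⟩
  haveI hM2fin : (M ↾ (M.E \ {e 0, e 4})).Finite := restrict_finite diff_subset
  set E2 := M.E \ {e 0, e 4} with hE2def
  set M2 := M ↾ E2 with hM2def
  unfold ThreeConnected at hndel
  push_neg at hndel
  obtain ⟨k, hk0, hk3, X, hXsub, hlamX, hXc1, hXc2⟩ := hndel
  have hXE2 : X ⊆ E2 := hXsub
  have hE2sub : E2 ⊆ M.E := diff_subset
  have hmemE2 : ∀ i, i < 5 → i ≠ 0 → i ≠ 4 → e i ∈ E2 := by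
    intro i hi h0 h4
    refine ⟨hmem i hi, fun h => ?_⟩
    simp only [mem_insert_iff, mem_singleton_iff] at h
    rcases h with h | h
    · exact hne i 0 hi (by omega) h0 h
    · exact hne i 4 hi (by omega) h4 h
  have he1E2 := hmemE2 1 (by omega) (by omega) (by omega)
  have he2E2 := hmemE2 2 (by omega) (by omega) (by omega)
  have he3E2 := hmemE2 3 (by omega) (by omega) (by omega)
  have hrnE2 : rn M E2 = rn M M.E := by
    have hsub23 : ({e 2, e 3} : Set α) ⊆ E2 :=
      insert_subset he2E2 (singleton_subset_iff.2 he3E2)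
    have h1 : rn M (insert (e 4) E2) = rn M E2 :=
      rn_insert_of_mem_closure (M.closure_subset_closure hsub23 hclB) hE2sub
    have hsub12 : ({e 1, e 2} : Set α) ⊆ insert (e 4) E2 :=
      (insert_subset he1E2 (singleton_subset_iff.2 he2E2)).trans (subset_insert _ _)
    have h2 : rn M (insert (e 0) (insert (e 4) E2)) = rn M (insert (e 4) E2) :=
      rn_insert_of_mem_closure (M.closure_subset_closure hsub12 hclA)
        (insert_subset he4E hE2sub)
    have h3 : insert (e 0) (insert (e 4) E2) = M.E := by
      ext x
      simp only [mem_insert_iff, hE2def, mem_diff, mem_singleton_iff]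
      constructor
      · rintro (rfl | rfl | ⟨hx, -⟩)
        · exact he0E
        · exact he4E
        · exact hx
      · intro hx
        by_cases hx0 : x = e 0
        · exact Or.inl hx0
        by_cases hx4 : x = e 4
        · exact Or.inr (Or.inl hx4)
        · exact Or.inr (Or.inr ⟨hx, by tauto⟩)
    rw [h3] at h2
    omega
  have hrnM2 : ∀ Y, Y ⊆ E2 → rn M2 Y = rn M Y := fun Y hY => rn_restrict M E2 hY
  have hlamM2 : ∀ Y, Y ⊆ E2 →
      lam M2 Y = (rn M Y : ℤ) + (rn M (E2 \ Y) : ℤ) - (rn M M.E : ℤ) := by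
    intro Y hY
    rw [lam_eq_rn]
    have hg : M2.E = E2 := rfl
    rw [hg, hrnM2 Y hY, hrnM2 _ diff_subset, hrnM2 E2 Subset.rfl, hrnE2]
  have hcocM : ∀ W, W ⊆ E2 → rn M (E2 \ W) < rn M M.E →
      ∃ D, Cocircuit M D ∧ D ⊆ insert (e 0) (insert (e 4) W) := by
    intro W hW hr
    apply exists_cocircuit_subset
      (insert_subset he0E (insert_subset he4E (hW.trans hE2sub)))
    have hsetW : M.E \ insert (e 0) (insert (e 4) W) = E2 \ W := by
      ext x
      simp only [hE2def, mem_diff, mem_insert_iff, mem_singleton_iff]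
      tauto
    rw [hsetW]
    exact hr
  have hTsubE2 : ({e 1, e 2, e 3} : Set α) ⊆ E2 :=
    insert_subset he1E2 (insert_subset he2E2 (singleton_subset_iff.2 he3E2))
  have hE2T : E2 \ {e 1, e 2, e 3} = M.E \ F := by
    rw [hF5, hE2def]
    ext x
    simp only [mem_diff, mem_insert_iff, mem_singleton_iff]
    tauto
  have hTcoc2 : Cocircuit M2 {e 1, e 2, e 3} := by
    rw [cocircuit_iff_rn]
    have hg : M2.E = E2 := rfl
    refine ⟨by rw [hg]; exact hTsubE2, ?_, ?_⟩
    · rw [hg, hrnM2 _ diff_subset, hrnM2 E2 Subset.rfl, hrnE2, hE2T]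
      have h1 := compl_cocircuit_rn hTc
      have h2 : rn M (M.E \ F) ≤ rn M (M.E \ {e 1, e 2, e 3}) :=
        rn_mono (diff_subset_diff_right hTsubF)
      omega
    · intro Y hY
      rw [hg, hrnM2 _ diff_subset, hrnM2 E2 Subset.rfl, hrnE2]
      by_contra hne3
      have hlt : rn M (E2 \ Y) < rn M M.E :=
        lt_of_le_of_ne (rn_mono (diff_subset.trans hE2sub)) hne3
      obtain ⟨D, hD, hDsub⟩ := hcocM Y (hY.subset.trans hTsubE2) hlt
      refine hgrand D hD (hDsub.trans ?_) ?_
      · refine insert_subset (hFmem 0 (by omega))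
          (insert_subset (hFmem 4 (by omega)) (hY.subset.trans hTsubF))
      · intro hDT
        have hTins : ({e 1, e 2, e 3} : Set α) ⊆ insert (e 0) (insert (e 4) Y) :=
          hDT ▸ hDsub
        have hTY : ({e 1, e 2, e 3} : Set α) ⊆ Y := by
          intro x hx
          have hxE2 := hTsubE2 hx
          rcases hTins hx with h0 | hrest
          · exfalso; apply hxE2.2; rw [h0]; exact mem_insert _ _
          rcases hrest with h4 | hY'
          · exfalso; apply hxE2.2; rw [h4]; exact Or.inr rfl
          · exact hY'
        exact absurd hTY hY.2
  -- the key connectivity-transfer lemma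
  have hKey : ∀ Z, Z ⊆ E2 → ({e 1, e 2, e 3} : Set α) ⊆ Z →
      lam M2 Z = lam M (insert (e 0) (insert (e 4) Z)) := by
    intro Z hZ hTZ
    haveI hN1fin : (M ↾ (M.E \ {e 0})).Finite := restrict_finite diff_subset
    have hsub0 : E2 ⊆ M.E \ {e 0} := fun x hx => ⟨hx.1, fun h => hx.2 (Or.inl h)⟩
    have hsub45 : (M.E \ {e 0}) \ {e 4} = E2 := by
      rw [diff_diff, Set.singleton_union, hE2def]
    have hMM : M2 = (M ↾ (M.E \ {e 0})) ↾ ((M.E \ {e 0}) \ {e 4}) := by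
      rw [Matroid.restrict_restrict_eq M (by rw [hsub45]; exact hsub0), hsub45]
    have he4N1 : e 4 ∈ M.E \ {e 0} := ⟨he4E, fun h => h04 h.symm⟩
    have hsub23Z : ({e 2, e 3} : Set α) ⊆ Z :=
      insert_subset (hTZ (Or.inr (mem_insert _ _)))
        (singleton_subset_iff.2 (hTZ (Or.inr (Or.inr rfl))))
    have he4cl : e 4 ∈ (M ↾ (M.E \ {e 0})).closure Z :=
      mem_closure_restrict diff_subset (hZ.trans hsub0) he4N1
        (M.closure_subset_closure hsub23Z hclB)
    have step1 : lam M2 Z = lam (M ↾ (M.E \ {e 0})) (insert (e 4) Z) := by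
      rw [hMM]
      exact lam_del (M := M ↾ (M.E \ {e 0})) (d := e 4) he4N1
        (hsub45.symm ▸ hZ) he4cl
    have hsub12Z : ({e 1, e 2} : Set α) ⊆ insert (e 4) Z :=
      (insert_subset (hTZ (mem_insert _ _))
        (singleton_subset_iff.2 (hTZ (Or.inr (mem_insert _ _))))).trans (subset_insert _ _)
    have step2 : lam (M ↾ (M.E \ {e 0})) (insert (e 4) Z) =
        lam M (insert (e 0) (insert (e 4) Z)) :=
      lam_del he0E (insert_subset he4N1 (hZ.trans hsub0))
        (M.closure_subset_closure hsub12Z hclA)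
    rw [step1, step2]
  have hKeyContra : ∀ Z, Z ⊆ E2 → ({e 1, e 2, e 3} : Set α) ⊆ Z → lam M2 Z ≤ 1 →
      2 ≤ (E2 \ Z).ncard → False := by
    intro Z hZ hTZ hlam h2
    have hX0E : insert (e 0) (insert (e 4) Z) ⊆ M.E :=
      insert_subset he0E (insert_subset he4E (hZ.trans hE2sub))
    have hEX0 : M.E \ insert (e 0) (insert (e 4) Z) = E2 \ Z := by
      ext x
      simp only [hE2def, mem_diff, mem_insert_iff, mem_singleton_iff]
      tauto
    have hlam0 : lam M (insert (e 0) (insert (e 4) Z)) ≤ 1 := (hKey Z hZ hTZ) ▸ hlam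
    have hpair04 : ({e 0, e 4} : Set α) ⊆ insert (e 0) (insert (e 4) Z) := by
      intro x hx
      rcases hx with rfl | hx
      · exact mem_insert _ _
      · exact Or.inr (Or.inl hx)
    have hcard2 : 2 ≤ (insert (e 0) (insert (e 4) Z)).ncard := by
      calc 2 = ({e 0, e 4} : Set α).ncard := (ncard_pair h04).symm
      _ ≤ _ := ncard_le_ncard hpair04 (hEfin.subset hX0E)
    have := threeConn_two_le_lam hM hX0E hcard2 (by rw [hEX0]; exact h2)
    omega
  have hKeyContra0 : ∀ Z, Z ⊆ E2 → ({e 1, e 2, e 3} : Set α) ⊆ Z → lam M2 Z = 0 →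
      1 ≤ (E2 \ Z).ncard → False := by
    intro Z hZ hTZ hlam h1
    have hX0E : insert (e 0) (insert (e 4) Z) ⊆ M.E :=
      insert_subset he0E (insert_subset he4E (hZ.trans hE2sub))
    have hEX0 : M.E \ insert (e 0) (insert (e 4) Z) = E2 \ Z := by
      ext x
      simp only [hE2def, mem_diff, mem_insert_iff, mem_singleton_iff]
      tauto
    have hlam0 : lam M (insert (e 0) (insert (e 4) Z)) = 0 := (hKey Z hZ hTZ) ▸ hlam
    refine threeConn_lam_ne_zero hM hX0E ⟨e 0, mem_insert _ _⟩ ?_ hlam0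
    rw [hEX0]
    exact nonempty_of_ncard_ne_zero (by omega)
  have hsingle : ∀ x, x ∈ E2 → lam M2 {x} = 0 →
      (∀ D, Cocircuit M D → D ⊆ {e 0, x, e 4} → False) → False := by
    intro x hx hlam hhandle
    have hxE : x ∈ M.E := hE2sub hx
    have h1 : rn M {x} ≤ 1 := by
      have := rn_le_ncard (M := M) (X := {x}) (finite_singleton x)
      simpa using this
    have hlam' := hlamM2 {x} (singleton_subset_iff.2 hx)
    rw [hlam] at hlam'
    have hr0 : rn M {x} = 0 ∨ rn M {x} = 1 := by omega
    rcases hr0 with hr | hr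
    · have hsp : rn M M.E ≤ rn M (M.E \ {x}) := by
        have hu := rn_union_le (M := M) (X := M.E \ {x}) (Y := {x})
        rw [diff_union_of_subset (singleton_subset_iff.2 hxE)] at hu
        omega
      have hlamx : lam M {x} = 0 := by
        have hmono := rn_mono (M := M) (diff_subset : M.E \ {x} ⊆ M.E)
        rw [lam_eq_rn]
        push_cast
        omega
      have hcompl : (M.E \ {x}).Nonempty := by
        have hcc : (M.E \ {x}).ncard = M.E.ncard - 1 := by
          rw [ncard_diff (singleton_subset_iff.2 hxE) (finite_singleton x), ncard_singleton]
        exact nonempty_of_ncard_ne_zero (by omega)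
      exact threeConn_lam_ne_zero hM (singleton_subset_iff.2 hxE) ⟨x, rfl⟩ hcompl hlamx
    · have hr2 : rn M (E2 \ {x}) < rn M M.E := by omega
      obtain ⟨D, hD, hDsub⟩ := hcocM {x} (singleton_subset_iff.2 hx) hr2
      refine hhandle D hD (hDsub.trans ?_)
      intro z hz
      simp only [mem_insert_iff, mem_singleton_iff] at hz ⊢
      tauto
  have hpair : ∀ x w, ({x, w} : Set α) ⊆ E2 → x ≠ w → lam M2 {x, w} ≤ 1 →
      ∃ D, Cocircuit M D ∧ D ⊆ {e 0, e 4, x, w} := by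
    intro x w hsub hxw hlam
    have hind : M.Indep {x, w} := by
      by_contra hdep
      obtain ⟨C, hC, hCsub⟩ := exists_circuit_subset (hsub.trans hE2sub) hdep
      have h3 := circuit_ncard_ge hM hE hC
      have h2 : C.ncard ≤ 2 := by
        have := ncard_le_ncard hCsub (hEfin.subset (hsub.trans hE2sub))
        rwa [ncard_pair hxw] at this
      omega
    have hrn2 : rn M {x, w} = 2 := by
      rw [rn_eq_ncard_of_indep hind, ncard_pair hxw]
    have hlam' := hlamM2 _ hsub
    rw [hlam'] at hlam
    have hr2 : rn M (E2 \ {x, w}) < rn M M.E := by omega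
    obtain ⟨D, hD, hDsub⟩ := hcocM _ hsub hr2
    refine ⟨D, hD, hDsub.trans ?_⟩
    intro z hz
    simp only [mem_insert_iff, mem_singleton_iff] at hz ⊢
    tauto
  have hzFhelp : ∀ z, z ∈ E2 → z ≠ e 1 → z ≠ e 2 → z ≠ e 3 → z ∉ F := by
    intro z hz h1 h2 h3
    rw [hF5]
    simp only [mem_insert_iff, mem_singleton_iff]
    push_neg
    exact ⟨fun h => hz.2 (Or.inl h), h1, h2, h3, fun h => hz.2 (Or.inr h)⟩
  -- main case analysis on the side P containing e 2
  have haux : ∀ P, P ⊆ E2 → e 2 ∈ P →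
      (lam M2 P = 0 ∧ 1 ≤ P.ncard ∧ 1 ≤ (E2 \ P).ncard ∨
       lam M2 P = 1 ∧ 2 ≤ P.ncard ∧ 2 ≤ (E2 \ P).ncard) →
      ∃ z ∈ M.E \ F, Cocircuit M {e 0, e 2, e 4, z} := by
    intro P hP he2P hpack
    have hlamP : lam M2 P ≤ 1 := by rcases hpack with ⟨h, -, -⟩ | ⟨h, -, -⟩ <;> omega
    have hlamQ : lam M2 (E2 \ P) ≤ 1 := by
      have h' : lam M2 (E2 \ P) = lam M2 P := lam_compl hP
      omega
    have hQfin : (E2 \ P).Finite := hEfin.subset (diff_subset.trans hE2sub)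
    have hPfin : P.Finite := hEfin.subset (hP.trans hE2sub)
    by_cases h1P : e 1 ∈ P <;> by_cases h3P : e 3 ∈ P
    · -- T ⊆ P : contradiction
      exfalso
      have hTP : ({e 1, e 2, e 3} : Set α) ⊆ P :=
        insert_subset h1P (insert_subset he2P (singleton_subset_iff.2 h3P))
      rcases hpack with ⟨h0, -, hc⟩ | ⟨h1, -, hc⟩
      · exact hKeyContra0 P hP hTP h0 hc
      · exact hKeyContra P hP hTP (by omega) hc
    · -- e1 ∈ P, e3 ∉ P
      exfalso
      have h3Q : e 3 ∈ E2 \ P := ⟨he3E2, h3P⟩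
      have hTP' : ({e 1, e 2, e 3} : Set α) ⊆ insert (e 3) P := by
        intro z hz
        simp only [mem_insert_iff, mem_singleton_iff] at hz
        rcases hz with rfl | rfl | rfl
        · exact Or.inr h1P
        · exact Or.inr he2P
        · exact mem_insert _ _
      have hmv : lam M2 (insert (e 3) P) ≤ lam M2 P :=
        lam_insert_le hTcoc2 (Or.inr (Or.inr rfl)) hTP' hP he3E2 h3P
      have hE2split : E2 \ insert (e 3) P = (E2 \ P) \ {e 3} := by
        ext z; simp only [mem_diff, mem_insert_iff, mem_singleton_iff]; tauto
      have hsmall : (E2 \ insert (e 3) P).ncard ≤ 1 := by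
        by_contra hbig
        push_neg at hbig
        exact hKeyContra _ (insert_subset he3E2 hP) hTP' (le_trans hmv hlamP) (by omega)
      have hQcard : (E2 \ P).ncard ≤ 2 := by
        have := ncard_diff_singleton_add_one h3Q hQfin
        rw [hE2split] at hsmall
        omega
      rcases Nat.lt_or_ge (E2 \ P).ncard 2 with hQ1 | hQ2
      · have h1Qc : 1 ≤ (E2 \ P).ncard := (ncard_pos hQfin).2 ⟨e 3, h3Q⟩
        have hQeq : E2 \ P = {e 3} := by
          obtain ⟨a, ha⟩ := ncard_eq_one.1 (by omega : (E2 \ P).ncard = 1)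
          have haa : a = e 3 := (mem_singleton_iff.1 (ha ▸ h3Q)).symm
          rw [ha, haa]
        rcases hpack with ⟨h0, -, -⟩ | ⟨-, -, hc⟩
        · have hlamQ0 : lam M2 {e 3} = 0 := by
            have h' : lam M2 (E2 \ P) = lam M2 P := lam_compl hP
            rw [hQeq] at h'
            omega
          refine hsingle (e 3) he3E2 hlamQ0 ?_
          intro D hD hDsub
          refine hgrand D hD (hDsub.trans ?_) ?_
          · intro z hz
            simp only [mem_insert_iff, mem_singleton_iff] at hz
            rcases hz with rfl | rfl | rfl
            · exact hFmem 0 (by omega)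
            · exact hFmem 3 (by omega)
            · exact hFmem 4 (by omega)
          · intro hDT
            have h1D : e 1 ∈ D := by rw [hDT]; exact mem_insert _ _
            have := hDsub h1D
            simp only [mem_insert_iff, mem_singleton_iff] at this
            rcases this with h | h | h
            · exact hne 1 0 (by omega) (by omega) (by omega) h
            · exact hne 1 3 (by omega) (by omega) (by omega) h
            · exact hne 1 4 (by omega) (by omega) (by omega) h
        · rw [hQeq, ncard_singleton] at hc; omega
      · have hd1 : ((E2 \ P) \ {e 3}).ncard = 1 := by
          have := ncard_diff_singleton_add_one h3Q hQfin
          omega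
        obtain ⟨w, hw⟩ := ncard_eq_one.1 hd1
        have hwQ : w ∈ (E2 \ P) \ {e 3} := by rw [hw]; exact rfl
        have hwE2 : w ∈ E2 := hwQ.1.1
        have hwP : w ∉ P := hwQ.1.2
        have hw3 : w ≠ e 3 := hwQ.2
        have hQeq : E2 \ P = {e 3, w} := by
          calc E2 \ P = insert (e 3) ((E2 \ P) \ {e 3}) := by
                rw [insert_diff_singleton, insert_eq_of_mem h3Q]
          _ = {e 3, w} := by rw [hw]
        have hw1 : w ≠ e 1 := fun h => hwP (h ▸ h1P)
        have hw2 : w ≠ e 2 := fun h => hwP (h ▸ he2P)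
        have hwF : w ∉ F := hzFhelp w hwE2 hw1 hw2 hw3
        have hwE : w ∈ M.E := hE2sub hwE2
        have hw0 : w ≠ e 0 := fun h => hwE2.2 (Or.inl h)
        have hw4 : w ≠ e 4 := fun h => hwE2.2 (Or.inr h)
        obtain ⟨D, hD, hDsub⟩ := hpair (e 3) w (by rw [← hQeq]; exact diff_subset)
          (Ne.symm hw3) (by rw [← hQeq]; exact hlamQ)
        have hD3 := cocircuit_ncard_ge hM hE hD
        have he0D : e 0 ∉ D := by
          intro h0D
          refine orthogonal hA hD (mem_insert _ _) h0D ?_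
          rintro z ⟨hzA, hzD⟩
          have hzsub := hDsub hzD
          simp only [mem_insert_iff, mem_singleton_iff] at hzA hzsub ⊢
          rcases hzA with rfl | rfl | rfl
          · rfl
          · rcases hzsub with h | h | h | h
            · exact absurd h (hne 1 0 (by omega) (by omega) (by omega))
            · exact absurd h (hne 1 4 (by omega) (by omega) (by omega))
            · exact absurd h (hne 1 3 (by omega) (by omega) (by omega))
            · exact absurd h.symm hw1
          · rcases hzsub with h | h | h | h
            · exact absurd h (hne 2 0 (by omega) (by omega) (by omega))
            · exact absurd h (hne 2 4 (by omega) (by omega) (by omega))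
            · exact absurd h (hne 2 3 (by omega) (by omega) (by omega))
            · exact absurd h.symm hw2
        have h34 : e 3 ∈ D ↔ e 4 ∈ D := by
          constructor
          · intro h3D
            by_contra h4D
            refine orthogonal hB hD (show e 3 ∈ ({e 2, e 3, e 4} : Set α) from
              Or.inr (mem_insert _ _)) h3D ?_
            rintro z ⟨hzB, hzD⟩
            have hzsub := hDsub hzD
            simp only [mem_insert_iff, mem_singleton_iff] at hzB hzsub ⊢
            rcases hzB with rfl | rfl | rfl
            · rcases hzsub with h | h | h | h
              · exact absurd h (hne 2 0 (by omega) (by omega) (by omega))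
              · exact absurd h (hne 2 4 (by omega) (by omega) (by omega))
              · exact absurd h (hne 2 3 (by omega) (by omega) (by omega))
              · exact absurd h.symm hw2
            · rfl
            · exact absurd hzD h4D
          · intro h4D
            by_contra h3D
            refine orthogonal hB hD (show e 4 ∈ ({e 2, e 3, e 4} : Set α) from
              Or.inr (Or.inr rfl)) h4D ?_
            rintro z ⟨hzB, hzD⟩
            have hzsub := hDsub hzD
            simp only [mem_insert_iff, mem_singleton_iff] at hzB hzsub ⊢
            rcases hzB with rfl | rfl | rfl
            · rcases hzsub with h | h | h | h
              · exact absurd h (hne 2 0 (by omega) (by omega) (by omega))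
              · exact absurd h (hne 2 4 (by omega) (by omega) (by omega))
              · exact absurd h (hne 2 3 (by omega) (by omega) (by omega))
              · exact absurd h.symm hw2
            · exact absurd hzD h3D
            · rfl
        by_cases h3D : e 3 ∈ D
        · have h4D := h34.1 h3D
          by_cases hwD : w ∈ D
          · have hDeq : D = {e 3, e 4, w} := by
              apply subset_antisymm
              · intro z hz
                have := hDsub hz
                simp only [mem_insert_iff, mem_singleton_iff] at this ⊢
                rcases this with h | h | h | h
                · exact absurd (h ▸ hz) he0D
                · tauto
                · tauto
                · tauto
              · exact insert_subset h3D (insert_subset h4D (singleton_subset_iff.2 hwD))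
            have hcard3 : ({e 3, e 4, w} : Set α).ncard = 3 := by
              have hns : e 4 ∉ ({w} : Set α) := fun h => hw4 (mem_singleton_iff.1 h).symm
              have hni : e 3 ∉ ({e 4, w} : Set α) := by
                simp only [mem_insert_iff, mem_singleton_iff]
                push_neg
                exact ⟨hne 3 4 (by omega) (by omega) (by omega), fun h => hw3 h.symm⟩
              rw [ncard_insert_of_notMem hni ((finite_singleton w).insert (e 4)),
                ncard_insert_of_notMem hns (finite_singleton w), ncard_singleton]
            have htriadD : Triad M {e 3, e 4, w} := ⟨hDeq ▸ hD, hcard3⟩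
            exact fan_extend_append hord hF hmax hboth htri0 hTd hT2 hwE hwF htriadD
          · have hsub2 : D ⊆ ({e 3, e 4} : Set α) := by
              intro z hz
              have := hDsub hz
              simp only [mem_insert_iff, mem_singleton_iff] at this ⊢
              rcases this with h | h | h | h
              · exact absurd (h ▸ hz) he0D
              · tauto
              · tauto
              · exact absurd (h ▸ hz) hwD
            have := ncard_le_ncard hsub2 ((finite_singleton (e 4)).insert (e 3))
            rw [ncard_pair (hne 3 4 (by omega) (by omega) (by omega))] at this
            omega
        · have h4D : e 4 ∉ D := fun h => h3D (h34.2 h)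
          have hsub1 : D ⊆ ({w} : Set α) := by
            intro z hz
            have := hDsub hz
            simp only [mem_insert_iff, mem_singleton_iff] at this ⊢
            rcases this with h | h | h | h
            · exact absurd (h ▸ hz) he0D
            · exact absurd (h ▸ hz) h4D
            · exact absurd (h ▸ hz) h3D
            · exact h
          have := ncard_le_ncard hsub1 (finite_singleton w)
          rw [ncard_singleton] at this
          omega
    · -- e1 ∉ P, e3 ∈ P
      exfalso
      have h1Q : e 1 ∈ E2 \ P := ⟨he1E2, h1P⟩
      have hTP' : ({e 1, e 2, e 3} : Set α) ⊆ insert (e 1) P := by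
        intro z hz
        simp only [mem_insert_iff, mem_singleton_iff] at hz
        rcases hz with rfl | rfl | rfl
        · exact mem_insert _ _
        · exact Or.inr he2P
        · exact Or.inr h3P
      have hmv : lam M2 (insert (e 1) P) ≤ lam M2 P :=
        lam_insert_le hTcoc2 (mem_insert _ _) hTP' hP he1E2 h1P
      have hE2split : E2 \ insert (e 1) P = (E2 \ P) \ {e 1} := by
        ext z; simp only [mem_diff, mem_insert_iff, mem_singleton_iff]; tauto
      have hsmall : (E2 \ insert (e 1) P).ncard ≤ 1 := by
        by_contra hbig
        push_neg at hbig
        exact hKeyContra _ (insert_subset he1E2 hP) hTP' (le_trans hmv hlamP) (by omega)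
      have hQcard : (E2 \ P).ncard ≤ 2 := by
        have := ncard_diff_singleton_add_one h1Q hQfin
        rw [hE2split] at hsmall
        omega
      rcases Nat.lt_or_ge (E2 \ P).ncard 2 with hQ1 | hQ2
      · have h1Qc : 1 ≤ (E2 \ P).ncard := (ncard_pos hQfin).2 ⟨e 1, h1Q⟩
        have hQeq : E2 \ P = {e 1} := by
          obtain ⟨a, ha⟩ := ncard_eq_one.1 (by omega : (E2 \ P).ncard = 1)
          have haa : a = e 1 := (mem_singleton_iff.1 (ha ▸ h1Q)).symm
          rw [ha, haa]
        rcases hpack with ⟨h0, -, -⟩ | ⟨-, -, hc⟩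
        · have hlamQ0 : lam M2 {e 1} = 0 := by
            have h' : lam M2 (E2 \ P) = lam M2 P := lam_compl hP
            rw [hQeq] at h'
            omega
          refine hsingle (e 1) he1E2 hlamQ0 ?_
          intro D hD hDsub
          refine hgrand D hD (hDsub.trans ?_) ?_
          · intro z hz
            simp only [mem_insert_iff, mem_singleton_iff] at hz
            rcases hz with rfl | rfl | rfl
            · exact hFmem 0 (by omega)
            · exact hFmem 1 (by omega)
            · exact hFmem 4 (by omega)
          · intro hDT
            have h2D : e 2 ∈ D := by rw [hDT]; exact Or.inr (mem_insert _ _)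
            have := hDsub h2D
            simp only [mem_insert_iff, mem_singleton_iff] at this
            rcases this with h | h | h
            · exact hne 2 0 (by omega) (by omega) (by omega) h
            · exact hne 2 1 (by omega) (by omega) (by omega) h
            · exact hne 2 4 (by omega) (by omega) (by omega) h
        · rw [hQeq, ncard_singleton] at hc; omega
      · have hd1 : ((E2 \ P) \ {e 1}).ncard = 1 := by
          have := ncard_diff_singleton_add_one h1Q hQfin
          omega
        obtain ⟨w, hw⟩ := ncard_eq_one.1 hd1
        have hwQ : w ∈ (E2 \ P) \ {e 1} := by rw [hw]; exact rfl
        have hwE2 : w ∈ E2 := hwQ.1.1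
        have hwP : w ∉ P := hwQ.1.2
        have hw1 : w ≠ e 1 := hwQ.2
        have hQeq : E2 \ P = {e 1, w} := by
          calc E2 \ P = insert (e 1) ((E2 \ P) \ {e 1}) := by
                rw [insert_diff_singleton, insert_eq_of_mem h1Q]
          _ = {e 1, w} := by rw [hw]
        have hw2 : w ≠ e 2 := fun h => hwP (h ▸ he2P)
        have hw3 : w ≠ e 3 := fun h => hwP (h ▸ h3P)
        have hwF : w ∉ F := hzFhelp w hwE2 hw1 hw2 hw3
        have hwE : w ∈ M.E := hE2sub hwE2
        have hw0 : w ≠ e 0 := fun h => hwE2.2 (Or.inl h)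
        have hw4 : w ≠ e 4 := fun h => hwE2.2 (Or.inr h)
        obtain ⟨D, hD, hDsub⟩ := hpair (e 1) w (by rw [← hQeq]; exact diff_subset)
          (Ne.symm hw1) (by rw [← hQeq]; exact hlamQ)
        have hD3 := cocircuit_ncard_ge hM hE hD
        have he4D : e 4 ∉ D := by
          intro h4D
          refine orthogonal hB hD (show e 4 ∈ ({e 2, e 3, e 4} : Set α) from
            Or.inr (Or.inr rfl)) h4D ?_
          rintro z ⟨hzB, hzD⟩
          have hzsub := hDsub hzD
          simp only [mem_insert_iff, mem_singleton_iff] at hzB hzsub ⊢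
          rcases hzB with rfl | rfl | rfl
          · rcases hzsub with h | h | h | h
            · exact absurd h (hne 2 0 (by omega) (by omega) (by omega))
            · exact absurd h (hne 2 4 (by omega) (by omega) (by omega))
            · exact absurd h (hne 2 1 (by omega) (by omega) (by omega))
            · exact absurd h.symm hw2
          · rcases hzsub with h | h | h | h
            · exact absurd h (hne 3 0 (by omega) (by omega) (by omega))
            · exact absurd h (hne 3 4 (by omega) (by omega) (by omega))
            · exact absurd h (hne 3 1 (by omega) (by omega) (by omega))
            · exact absurd h.symm hw3
          · rfl
        have h01 : e 0 ∈ D ↔ e 1 ∈ D := by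
          constructor
          · intro h0D
            by_contra h1D
            refine orthogonal hA hD (mem_insert _ _) h0D ?_
            rintro z ⟨hzA, hzD⟩
            have hzsub := hDsub hzD
            simp only [mem_insert_iff, mem_singleton_iff] at hzA hzsub ⊢
            rcases hzA with rfl | rfl | rfl
            · rfl
            · exact absurd hzD h1D
            · rcases hzsub with h | h | h | h
              · exact absurd h (hne 2 0 (by omega) (by omega) (by omega))
              · exact absurd h (hne 2 4 (by omega) (by omega) (by omega))
              · exact absurd h (hne 2 1 (by omega) (by omega) (by omega))
              · exact absurd h.symm hw2
          · intro h1D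
            by_contra h0D
            refine orthogonal hA hD (show e 1 ∈ ({e 0, e 1, e 2} : Set α) from
              Or.inr (mem_insert _ _)) h1D ?_
            rintro z ⟨hzA, hzD⟩
            have hzsub := hDsub hzD
            simp only [mem_insert_iff, mem_singleton_iff] at hzA hzsub ⊢
            rcases hzA with rfl | rfl | rfl
            · exact absurd hzD h0D
            · rfl
            · rcases hzsub with h | h | h | h
              · exact absurd h (hne 2 0 (by omega) (by omega) (by omega))
              · exact absurd h (hne 2 4 (by omega) (by omega) (by omega))
              · exact absurd h (hne 2 1 (by omega) (by omega) (by omega))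
              · exact absurd h.symm hw2
        by_cases h1D : e 1 ∈ D
        · have h0D : e 0 ∈ D := h01.2 h1D
          by_cases hwD : w ∈ D
          · have hDeq : D = {e 0, e 1, w} := by
              apply subset_antisymm
              · intro z hz
                have := hDsub hz
                simp only [mem_insert_iff, mem_singleton_iff] at this ⊢
                rcases this with h | h | h | h
                · tauto
                · exact absurd (h ▸ hz) he4D
                · tauto
                · tauto
              · exact insert_subset h0D (insert_subset h1D (singleton_subset_iff.2 hwD))
            have hcard3 : ({e 0, e 1, w} : Set α).ncard = 3 := by
              have hns : e 1 ∉ ({w} : Set α) := fun h => hw1 (mem_singleton_iff.1 h).symm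
              have hni : e 0 ∉ ({e 1, w} : Set α) := by
                simp only [mem_insert_iff, mem_singleton_iff]
                push_neg
                exact ⟨hne 0 1 (by omega) (by omega) (by omega), fun h => hw0 h.symm⟩
              rw [ncard_insert_of_notMem hni ((finite_singleton w).insert (e 1)),
                ncard_insert_of_notMem hns (finite_singleton w), ncard_singleton]
            have hset : ({e 0, e 1, w} : Set α) = {w, e 0, e 1} := by
              ext z; simp only [mem_insert_iff, mem_singleton_iff]; tauto
            have htriadD : Triad M {w, e 0, e 1} :=
              ⟨by rw [← hset, ← hDeq]; exact hD, by rw [← hset]; exact hcard3⟩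
            exact fan_extend_prepend hord hF hmax hboth htri0 hTd hT2 hwE hwF htriadD
          · have hsub2 : D ⊆ ({e 0, e 1} : Set α) := by
              intro z hz
              have := hDsub hz
              simp only [mem_insert_iff, mem_singleton_iff] at this ⊢
              rcases this with h | h | h | h
              · tauto
              · exact absurd (h ▸ hz) he4D
              · tauto
              · exact absurd (h ▸ hz) hwD
            have := ncard_le_ncard hsub2 ((finite_singleton (e 1)).insert (e 0))
            rw [ncard_pair (hne 0 1 (by omega) (by omega) (by omega))] at this
            omega
        · have h0D : e 0 ∉ D := fun h => h1D (h01.1 h)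
          have hsub1 : D ⊆ ({w} : Set α) := by
            intro z hz
            have := hDsub hz
            simp only [mem_insert_iff, mem_singleton_iff] at this ⊢
            rcases this with h | h | h | h
            · exact absurd (h ▸ hz) h0D
            · exact absurd (h ▸ hz) he4D
            · exact absurd (h ▸ hz) h1D
            · exact h
          have := ncard_le_ncard hsub1 (finite_singleton w)
          rw [ncard_singleton] at this
          omega
    · -- e1 ∉ P, e3 ∉ P : this is the case producing the cocircuit
      have h1Q : e 1 ∈ E2 \ P := ⟨he1E2, h1P⟩
      have h3Q : e 3 ∈ E2 \ P := ⟨he3E2, h3P⟩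
      have hTZ' : ({e 1, e 2, e 3} : Set α) ⊆ insert (e 2) (E2 \ P) := by
        intro z hz
        simp only [mem_insert_iff, mem_singleton_iff] at hz
        rcases hz with rfl | rfl | rfl
        · exact Or.inr h1Q
        · exact mem_insert _ _
        · exact Or.inr h3Q
      have he2Q : e 2 ∉ E2 \ P := fun h => h.2 he2P
      have hmv : lam M2 (insert (e 2) (E2 \ P)) ≤ lam M2 (E2 \ P) :=
        lam_insert_le hTcoc2 (Or.inr (mem_insert _ _)) hTZ' diff_subset he2E2 he2Q
      have hsplit : E2 \ insert (e 2) (E2 \ P) = P \ {e 2} := by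
        ext z
        simp only [mem_diff, mem_insert_iff, mem_singleton_iff, not_or]
        constructor
        · rintro ⟨hzE2, hz2, hzP⟩
          refine ⟨?_, hz2⟩
          by_contra hzP'
          exact hzP ⟨hzE2, hzP'⟩
        · rintro ⟨hzP, hz2⟩
          exact ⟨hP hzP, hz2, fun hc => hc.2 hzP⟩
      have hsmall : (E2 \ insert (e 2) (E2 \ P)).ncard ≤ 1 := by
        by_contra hbig
        push_neg at hbig
        exact hKeyContra _ (insert_subset he2E2 diff_subset) hTZ'
          (le_trans hmv hlamQ) (by omega)
      rw [hsplit] at hsmall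
      have hPcard : P.ncard ≤ 2 := by
        have := ncard_diff_singleton_add_one he2P hPfin
        omega
      rcases Nat.lt_or_ge P.ncard 2 with hP1 | hP2
      · have h1Pc : 1 ≤ P.ncard := (ncard_pos hPfin).2 ⟨e 2, he2P⟩
        have hPeq : P = {e 2} := by
          obtain ⟨a, ha⟩ := ncard_eq_one.1 (by omega : P.ncard = 1)
          have haa : a = e 2 := (mem_singleton_iff.1 (ha ▸ he2P)).symm
          rw [ha, haa]
        rcases hpack with ⟨h0, -, -⟩ | ⟨-, hc, -⟩
        · refine (hsingle (e 2) he2E2 (by rw [← hPeq]; exact h0) ?_).elim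
          intro D hD hDsub
          refine hgrand D hD (hDsub.trans ?_) ?_
          · intro z hz
            simp only [mem_insert_iff, mem_singleton_iff] at hz
            rcases hz with rfl | rfl | rfl
            · exact hFmem 0 (by omega)
            · exact hFmem 2 (by omega)
            · exact hFmem 4 (by omega)
          · intro hDT
            have h1D : e 1 ∈ D := by rw [hDT]; exact mem_insert _ _
            have := hDsub h1D
            simp only [mem_insert_iff, mem_singleton_iff] at this
            rcases this with h | h | h
            · exact hne 1 0 (by omega) (by omega) (by omega) h
            · exact hne 1 2 (by omega) (by omega) (by omega) h
            · exact hne 1 4 (by omega) (by omega) (by omega) h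
        · rw [hPeq, ncard_singleton] at hc; omega
      · have hd1 : (P \ {e 2}).ncard = 1 := by
          have := ncard_diff_singleton_add_one he2P hPfin
          omega
        obtain ⟨z0, hz0⟩ := ncard_eq_one.1 hd1
        have hz0P : z0 ∈ P \ {e 2} := by rw [hz0]; exact rfl
        have hz0E2 : z0 ∈ E2 := hP hz0P.1
        have hz02 : z0 ≠ e 2 := hz0P.2
        have hPeq : P = {e 2, z0} := by
          calc P = insert (e 2) (P \ {e 2}) := by
                rw [insert_diff_singleton, insert_eq_of_mem he2P]
          _ = {e 2, z0} := by rw [hz0]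
        have hz01 : z0 ≠ e 1 := fun h => h1P (h ▸ hz0P.1)
        have hz03 : z0 ≠ e 3 := fun h => h3P (h ▸ hz0P.1)
        have hz0F : z0 ∉ F := hzFhelp z0 hz0E2 hz01 hz02 hz03
        have hz0E : z0 ∈ M.E := hE2sub hz0E2
        obtain ⟨D, hD, hDsub⟩ := hpair (e 2) z0 (by rw [← hPeq]; exact hP)
          (Ne.symm hz02) (by rw [← hPeq]; exact hlamP)
        have hD3 := cocircuit_ncard_ge hM hE hD
        have h20 : e 2 ∈ D ↔ e 0 ∈ D := by
          constructor
          · intro h2D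
            by_contra h0D
            refine orthogonal hA hD (show e 2 ∈ ({e 0, e 1, e 2} : Set α) from
              Or.inr (Or.inr rfl)) h2D ?_
            rintro y ⟨hyA, hyD⟩
            have hysub := hDsub hyD
            simp only [mem_insert_iff, mem_singleton_iff] at hyA hysub ⊢
            rcases hyA with rfl | rfl | rfl
            · exact absurd hyD h0D
            · rcases hysub with h | h | h | h
              · exact absurd h (hne 1 0 (by omega) (by omega) (by omega))
              · exact absurd h (hne 1 4 (by omega) (by omega) (by omega))
              · exact absurd h (hne 1 2 (by omega) (by omega) (by omega))
              · exact absurd h.symm hz01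
            · rfl
          · intro h0D
            by_contra h2D
            refine orthogonal hA hD (mem_insert _ _) h0D ?_
            rintro y ⟨hyA, hyD⟩
            have hysub := hDsub hyD
            simp only [mem_insert_iff, mem_singleton_iff] at hyA hysub ⊢
            rcases hyA with rfl | rfl | rfl
            · rfl
            · rcases hysub with h | h | h | h
              · exact absurd h (hne 1 0 (by omega) (by omega) (by omega))
              · exact absurd h (hne 1 4 (by omega) (by omega) (by omega))
              · exact absurd h (hne 1 2 (by omega) (by omega) (by omega))
              · exact absurd h.symm hz01
            · exact absurd hyD h2D
        have h24 : e 2 ∈ D ↔ e 4 ∈ D := by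
          constructor
          · intro h2D
            by_contra h4D
            refine orthogonal hB hD (mem_insert _ _) h2D ?_
            rintro y ⟨hyB, hyD⟩
            have hysub := hDsub hyD
            simp only [mem_insert_iff, mem_singleton_iff] at hyB hysub ⊢
            rcases hyB with rfl | rfl | rfl
            · rfl
            · rcases hysub with h | h | h | h
              · exact absurd h (hne 3 0 (by omega) (by omega) (by omega))
              · exact absurd h (hne 3 4 (by omega) (by omega) (by omega))
              · exact absurd h (hne 3 2 (by omega) (by omega) (by omega))
              · exact absurd h.symm hz03
            · exact absurd hyD h4D
          · intro h4D
            by_contra h2D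
            refine orthogonal hB hD (show e 4 ∈ ({e 2, e 3, e 4} : Set α) from
              Or.inr (Or.inr rfl)) h4D ?_
            rintro y ⟨hyB, hyD⟩
            have hysub := hDsub hyD
            simp only [mem_insert_iff, mem_singleton_iff] at hyB hysub ⊢
            rcases hyB with rfl | rfl | rfl
            · exact absurd hyD h2D
            · rcases hysub with h | h | h | h
              · exact absurd h (hne 3 0 (by omega) (by omega) (by omega))
              · exact absurd h (hne 3 4 (by omega) (by omega) (by omega))
              · exact absurd h (hne 3 2 (by omega) (by omega) (by omega))
              · exact absurd h.symm hz03
            · rfl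
        by_cases h2D : e 2 ∈ D
        · have h0D := h20.1 h2D
          have h4D := h24.1 h2D
          by_cases hz0D : z0 ∈ D
          · have hDeq : D = {e 0, e 2, e 4, z0} := by
              apply subset_antisymm
              · intro y hy
                have := hDsub hy
                simp only [mem_insert_iff, mem_singleton_iff] at this ⊢
                tauto
              · intro y hy
                simp only [mem_insert_iff, mem_singleton_iff] at hy
                rcases hy with rfl | rfl | rfl | rfl
                exacts [h0D, h2D, h4D, hz0D]
            exact ⟨z0, ⟨hz0E, hz0F⟩, hDeq ▸ hD⟩
          · exfalso
            refine hgrand D hD ?_ ?_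
            · intro y hy
              have := hDsub hy
              simp only [mem_insert_iff, mem_singleton_iff] at this
              rcases this with h | h | h | h
              · rw [h]; exact hFmem 0 (by omega)
              · rw [h]; exact hFmem 4 (by omega)
              · rw [h]; exact hFmem 2 (by omega)
              · exact absurd (h ▸ hy) hz0D
            · intro hDT
              have h1D : e 1 ∈ D := by rw [hDT]; exact mem_insert _ _
              have := hDsub h1D
              simp only [mem_insert_iff, mem_singleton_iff] at this
              rcases this with h | h | h | h
              · exact hne 1 0 (by omega) (by omega) (by omega) h
              · exact hne 1 4 (by omega) (by omega) (by omega) h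
              · exact hne 1 2 (by omega) (by omega) (by omega) h
              · exact hz01 h.symm
        · exfalso
          have h0D : e 0 ∉ D := fun h => h2D (h20.2 h)
          have h4D : e 4 ∉ D := fun h => h2D (h24.2 h)
          have hsub1 : D ⊆ ({z0} : Set α) := by
            intro y hy
            have := hDsub hy
            simp only [mem_insert_iff, mem_singleton_iff] at this ⊢
            rcases this with h | h | h | h
            · exact absurd (h ▸ hy) h0D
            · exact absurd (h ▸ hy) h4D
            · exact absurd (h ▸ hy) h2D
            · exact h
          have := ncard_le_ncard hsub1 (finite_singleton z0)
          rw [ncard_singleton] at this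
          omega
  -- assemble: apply haux to the side containing e 2
  have hpackX : lam M2 X = 0 ∧ 1 ≤ X.ncard ∧ 1 ≤ (E2 \ X).ncard ∨
      lam M2 X = 1 ∧ 2 ≤ X.ncard ∧ 2 ≤ (E2 \ X).ncard := by
    interval_cases k
    · left
      norm_num at hlamX
      exact ⟨hlamX, by exact_mod_cast hXc1, by exact_mod_cast hXc2⟩
    · right
      norm_num at hlamX
      exact ⟨hlamX, by exact_mod_cast hXc1, by exact_mod_cast hXc2⟩
  by_cases he2X : e 2 ∈ X
  · exact haux X hXE2 he2X hpackX
  · have he2Q : e 2 ∈ E2 \ X := ⟨he2E2, he2X⟩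
    have hcompl : E2 \ (E2 \ X) = X := diff_diff_cancel_left hXE2
    have hlamC : lam M2 (E2 \ X) = lam M2 X := lam_compl hXE2
    refine haux (E2 \ X) diff_subset he2Q ?_
    rcases hpackX with ⟨h0, ha, hb⟩ | ⟨h1, ha, hb⟩
    · left; exact ⟨by rw [hlamC]; exact h0, hb, by rw [hcompl]; exact ha⟩
    · right; exact ⟨by rw [hlamC]; exact h1, hb, by rw [hcompl]; exact ha⟩
end DetPairs
end
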